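/- arXiv:1207.1961 — 7 statements merged into one kernel-verified Lean document; each statement's English description precedes it below -/
import Mathlib

section
/- The complete graph K₃ has no oriented perfect path double cover. -/
/-- An oriented perfect path double cover: for each vertex `v`, a directed path
`P v` (a nonempty list of distinct vertices, consecutive ones adjacent) starting
at `v`, such that each vertex is the end of exactly one path, and each arc of the
symmetric orientation lies in exactly one path. -/
def HasOPPDC {V : Type*} (G : SimpleGraph V) : Prop :=
  ∃ P : V → List V,
    (∀ v, P v ≠ [] ∧ (P v).Nodup ∧ (P v).Chain' G.Adj ∧ (P v).head? = some v) ∧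
    (∀ w : V, ∃! v, (P v).getLast? = some w) ∧
    (∀ a b : V, G.Adj a b → ∃! v, (a, b) ∈ (P v).zip (P v).tail)

lemma classifyK3 (l : List (Fin 3)) (h : l.Nodup) (v : Fin 3) (hh : l.head? = some v) :
    l = [v] ∨ l = [v, v+1] ∨ l = [v, v+2] ∨ l = [v, v+1, v+2] ∨ l = [v, v+2, v+1] := by
  match l with
  | [] => simp at hh
  | [a] =>
    simp only [List.head?_cons, Option.some.injEq] at hh
    subst hh; tauto
  | [a, b] =>
    simp only [List.head?_cons, Option.some.injEq] at hh
    subst hh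
    fin_cases a <;> fin_cases b <;> simp_all
  | [a, b, c] =>
    simp only [List.head?_cons, Option.some.injEq] at hh
    subst hh
    fin_cases a <;> fin_cases b <;> fin_cases c <;> simp_all
  | a :: b :: c :: d :: l =>
    exfalso
    have := h.length_le_card
    simp at this
    omega

/-- K₃ has no oriented perfect path double cover. -/
theorem K3_no_OPPDC : ¬ HasOPPDC (⊤ : SimpleGraph (Fin 3)) := by
  rintro ⟨P, h1, h2, h3⟩
  obtain ⟨l0, e0⟩ : ∃ l, P 0 = l := ⟨_, rfl⟩
  obtain ⟨l1, e1⟩ : ∃ l, P 1 = l := ⟨_, rfl⟩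
  obtain ⟨l2, e2⟩ : ∃ l, P 2 = l := ⟨_, rfl⟩
  have hP : ∀ v : Fin 3, P v = ![l0, l1, l2] v := by
    intro v; fin_cases v <;> simp [e0, e1, e2]
  simp only [hP, SimpleGraph.top_adj, ExistsUnique] at h2 h3
  have m0 := classifyK3 l0 (e0 ▸ (h1 0).2.1) 0 (e0 ▸ (h1 0).2.2.2)
  have m1 := classifyK3 l1 (e1 ▸ (h1 1).2.1) 1 (e1 ▸ (h1 1).2.2.2)
  have m2 := classifyK3 l2 (e2 ▸ (h1 2).2.1) 2 (e2 ▸ (h1 2).2.2.2)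
  norm_num at m0 m1 m2
  rcases m0 with e|e|e|e|e <;> subst e <;>
    rcases m1 with e|e|e|e|e <;> subst e <;>
      rcases m2 with e|e|e|e|e <;> subst e <;>
        revert h2 h3 <;> decide
end

section
/- The complete graph K₅ has no oriented perfect path double cover. -/
/- ### Auxiliary: bounded search over candidate Hamiltonian paths -/

abbrev Pth := Fin 5 → Fin 5

def covers (f : Pth) (a b : Fin 5) : Prop :=
  ∃ i : Fin 4, f i.castSucc = a ∧ f i.succ = b

def valid (v : Fin 5) (f : Pth) : Prop := Function.Injective f ∧ f 0 = v

def compat (f g : Pth) : Prop :=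
  f 4 ≠ g 4 ∧ ∀ i : Fin 4, ¬covers g (f i.castSucc) (f i.succ)

def coverAll (f0 f1 f2 f3 f4 : Pth) : Prop :=
  ∀ a b : Fin 5, a ≠ b →
    covers f0 a b ∨ covers f1 a b ∨ covers f2 a b ∨ covers f3 a b ∨ covers f4 a b

instance (f : Pth) (a b : Fin 5) : Decidable (covers f a b) := by unfold covers; infer_instance
instance (v : Fin 5) (f : Pth) : Decidable (valid v f) := by unfold valid; infer_instance
instance (f g : Pth) : Decidable (compat f g) := by unfold compat; infer_instance
instance (f0 f1 f2 f3 f4 : Pth) : Decidable (coverAll f0 f1 f2 f3 f4) := by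
  unfold coverAll; infer_instance

def univP : List Pth :=
  (List.finRange 5).permutations'.map (fun l i => l.getD i 0)

lemma mem_univP {f : Pth} (hf : Function.Injective f) : f ∈ univP := by
  have h01 : f 0 ≠ f 1 := hf.ne (by decide)
  have h02 : f 0 ≠ f 2 := hf.ne (by decide)
  have h03 : f 0 ≠ f 3 := hf.ne (by decide)
  have h04 : f 0 ≠ f 4 := hf.ne (by decide)
  have h12 : f 1 ≠ f 2 := hf.ne (by decide)
  have h13 : f 1 ≠ f 3 := hf.ne (by decide)
  have h14 : f 1 ≠ f 4 := hf.ne (by decide)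
  have h23 : f 2 ≠ f 3 := hf.ne (by decide)
  have h24 : f 2 ≠ f 4 := hf.ne (by decide)
  have h34 : f 3 ≠ f 4 := hf.ne (by decide)
  have hnd : ([f 0, f 1, f 2, f 3, f 4] : List (Fin 5)).Nodup := by
    simp [List.nodup_cons, h01, h02, h03, h04, h12, h13, h14, h23, h24, h34]
  have hperm : ([f 0, f 1, f 2, f 3, f 4] : List (Fin 5)).Perm (List.finRange 5) := by
    refine List.perm_of_nodup_nodup_toFinset_eq hnd (List.nodup_finRange 5) ?_
    rw [List.toFinset_finRange]
    refine Finset.eq_univ_of_card _ ?_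
    rw [List.toFinset_card_of_nodup hnd]
    simp
  have hfun : (fun i : Fin 5 => ([f 0, f 1, f 2, f 3, f 4] : List (Fin 5)).getD i 0) = f := by
    funext i; fin_cases i <;> rfl
  rw [← hfun]
  exact List.mem_map.2 ⟨_, List.mem_permutations'.2 hperm, rfl⟩

def L0 : List Pth := univP.filter fun f => decide (f 0 = 0)
def L1 : List Pth := univP.filter fun f => decide (f 0 = 1)
def L2 : List Pth := univP.filter fun f => decide (f 0 = 2)
def L3 : List Pth := univP.filter fun f => decide (f 0 = 3)
def L4 : List Pth := univP.filter fun f => decide (f 0 = 4)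

def searchB : Bool :=
  L0.any fun f0 =>
    L1.any fun f1 => decide (compat f0 f1) &&
      (L2.any fun f2 => decide (compat f0 f2) && decide (compat f1 f2) &&
        (L3.any fun f3 => decide (compat f0 f3) && decide (compat f1 f3) && decide (compat f2 f3) &&
          (L4.any fun f4 => decide (compat f0 f4) && decide (compat f1 f4) && decide (compat f2 f4) && decide (compat f3 f4) &&
            decide (coverAll f0 f1 f2 f3 f4))))

set_option maxRecDepth 1000000 in
set_option maxHeartbeats 1000000000 in
lemma search_false : searchB = false := by decide

lemma searchB_true {f0 f1 f2 f3 f4 : Pth}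
    (h0 : valid 0 f0) (h1 : valid 1 f1) (h2 : valid 2 f2) (h3 : valid 3 f3) (h4 : valid 4 f4)
    (c01 : compat f0 f1) (c02 : compat f0 f2) (c03 : compat f0 f3) (c04 : compat f0 f4)
    (c12 : compat f1 f2) (c13 : compat f1 f3) (c14 : compat f1 f4)
    (c23 : compat f2 f3) (c24 : compat f2 f4) (c34 : compat f3 f4)
    (hall : coverAll f0 f1 f2 f3 f4) : searchB = true := by
  have m : ∀ (v : Fin 5) (f : Pth), valid v f →
      f ∈ univP.filter fun f => decide (f 0 = v) := by
    intro v f hv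
    exact List.mem_filter.2 ⟨mem_univP hv.1, by simpa using hv.2⟩
  unfold searchB L0 L1 L2 L3 L4
  simp only [List.any_eq_true, Bool.and_eq_true, decide_eq_true_eq]
  exact ⟨f0, m 0 f0 h0, f1, m 1 f1 h1, c01, f2, m 2 f2 h2, ⟨c02, c12⟩,
    f3, m 3 f3 h3, ⟨⟨c03, c13⟩, c23⟩, f4, m 4 f4 h4, ⟨⟨⟨c04, c14⟩, c24⟩, c34⟩, hall⟩

/- ### List helper lemmas -/

lemma mem_zip_tail {α : Type*} (l : List α) (a b : α) :
    (a, b) ∈ l.zip l.tail ↔ ∃ (i : ℕ) (h : i + 1 < l.length), l[i] = a ∧ l[i+1] = b := by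
  have htl : l.tail.length = l.length - 1 := List.length_tail
  constructor
  · intro hm
    obtain ⟨i, hi, he⟩ := List.mem_iff_getElem.1 hm
    have hzl : (l.zip l.tail).length = l.length ⊓ l.tail.length := List.length_zip
    have hi1 : i + 1 < l.length := by
      rw [hzl] at hi; omega
    refine ⟨i, hi1, ?_, ?_⟩
    · have := congrArg Prod.fst he
      rwa [List.getElem_zip] at this
    · have := congrArg Prod.snd he
      rw [List.getElem_zip] at this
      rwa [List.getElem_tail] at this
  · rintro ⟨i, hi, ha, hb⟩
    apply List.mem_iff_getElem.2
    have hzl : (l.zip l.tail).length = l.length ⊓ l.tail.length := List.length_zip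
    have hiz : i < (l.zip l.tail).length := by rw [hzl]; omega
    refine ⟨i, hiz, ?_⟩
    rw [List.getElem_zip, List.getElem_tail, ha, hb]

lemma zip_tail_nodup {α : Type*} {l : List α} (h : l.Nodup) : (l.zip l.tail).Nodup := by
  rw [List.nodup_iff_injective_get]
  intro i j hij
  have h1 := congrArg Prod.fst hij
  simp only [List.get_eq_getElem, List.getElem_zip] at h1
  exact Fin.ext ((h.getElem_inj_iff).1 h1)

lemma ne_of_mem_zip_tail {α : Type*} {l : List α} (hnd : l.Nodup) {a b : α}
    (hm : (a, b) ∈ l.zip l.tail) : a ≠ b := by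
  obtain ⟨i, hi, ha, hb⟩ := (mem_zip_tail _ _ _).1 hm
  intro hab
  have : l[i] = l[i+1] := by rw [ha, hb, hab]
  have := (hnd.getElem_inj_iff).1 this
  omega

/- ### The counting argument: every path in an OPPDC of K₅ is Hamiltonian -/

lemma lengths_eq_five (P : Fin 5 → List (Fin 5))
    (hne : ∀ v, P v ≠ []) (hnd : ∀ v, (P v).Nodup)
    (hArc : ∀ a b : Fin 5, a ≠ b → ∃! v, (a, b) ∈ (P v).zip (P v).tail) :
    ∀ v, (P v).length = 5 := by
  classical
  set T : Finset (Fin 5 × Fin 5) := Finset.univ.filter (fun x => x.1 ≠ x.2) with hT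
  set S : Fin 5 → Finset (Fin 5 × Fin 5) := fun v => ((P v).zip (P v).tail).toFinset with hS
  have hsub : ∀ v, S v ⊆ T := by
    intro v x hx
    obtain ⟨a, b⟩ := x
    rw [hS, List.mem_toFinset] at hx
    simp only [hT, Finset.mem_filter, Finset.mem_univ, true_and]
    exact ne_of_mem_zip_tail (hnd v) hx
  have hdisj : ∀ v ∈ Finset.univ, ∀ w ∈ Finset.univ, v ≠ w → Disjoint (S v) (S w) := by
    intro v _ w _ hvw
    rw [Finset.disjoint_left]
    rintro ⟨a, b⟩ hv hw
    rw [hS, List.mem_toFinset] at hv hw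
    obtain ⟨u, _, hu⟩ := hArc a b (ne_of_mem_zip_tail (hnd v) hv)
    exact hvw ((hu v hv).trans (hu w hw).symm)
  have hunion : Finset.univ.biUnion S = T := by
    apply Finset.Subset.antisymm
    · intro x hx
      obtain ⟨v, _, hv⟩ := Finset.mem_biUnion.1 hx
      exact hsub v hv
    · rintro ⟨a, b⟩ hx
      rw [hT, Finset.mem_filter] at hx
      obtain ⟨u, hu, _⟩ := hArc a b hx.2
      exact Finset.mem_biUnion.2 ⟨u, Finset.mem_univ u, List.mem_toFinset.2 hu⟩
  have hTcard : T.card = 20 := by rw [hT]; decide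
  have hScard : ∀ v, (S v).card = (P v).length - 1 := by
    intro v
    rw [hS]
    rw [List.toFinset_card_of_nodup (zip_tail_nodup (hnd v))]
    rw [List.length_zip, List.length_tail]
    have : 1 ≤ (P v).length := List.length_pos_iff.2 (hne v)
    omega
  have hsum : ∑ v : Fin 5, ((P v).length - 1) = 20 := by
    rw [← hTcard, ← hunion, Finset.card_biUnion hdisj]
    exact Finset.sum_congr rfl (fun v _ => (hScard v).symm)
  have hub : ∀ v : Fin 5, (P v).length ≤ 5 :=
    fun v => by simpa using (hnd v).length_le_card
  intro v
  by_contra hv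
  have h4 : (P v).length - 1 < 4 := by
    have := hub v; have := List.length_pos_iff.2 (hne v); omega
  have hlt : ∑ w : Fin 5, ((P w).length - 1) < ∑ _w : Fin 5, 4 := by
    apply Finset.sum_lt_sum
    · intro i _; have := hub i; omega
    · exact ⟨v, Finset.mem_univ v, h4⟩
  simp at hlt
  omega

/- ### Main theorem -/

/-- K₅ has no oriented perfect path double cover. -/
theorem K5_no_OPPDC : ¬ HasOPPDC (⊤ : SimpleGraph (Fin 5)) := by
  rintro ⟨P, hP, hEnd, hArc⟩
  have hne : ∀ v, P v ≠ [] := fun v => (hP v).1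
  have hnd : ∀ v, (P v).Nodup := fun v => (hP v).2.1
  have hhd : ∀ v, (P v).head? = some v := fun v => (hP v).2.2.2
  have hArc' : ∀ a b : Fin 5, a ≠ b → ∃! v, (a, b) ∈ (P v).zip (P v).tail :=
    fun a b hab => hArc a b ((SimpleGraph.top_adj a b).2 hab)
  have key : ∀ v, (P v).length = 5 := lengths_eq_five P hne hnd hArc'
  set F : Fin 5 → Pth := fun v i => (P v)[(i : ℕ)]'(by rw [key v]; exact i.isLt) with hF
  have hvalid : ∀ v, valid v (F v) := by
    intro v
    constructor
    · intro i j hij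
      simp only [hF] at hij
      exact Fin.ext (((hnd v).getElem_inj_iff).1 hij)
    · have h0 := hhd v
      rw [List.head?_eq_head (hne v), List.head_eq_getElem] at h0
      simpa [hF] using Option.some.inj h0
  have hlast : ∀ v, (P v).getLast? = some (F v 4) := by
    intro v
    rw [List.getLast?_eq_getLast (hne v), List.getLast_eq_getElem]
    simp only [hF, key v]
    rfl
  have hcovers : ∀ (v : Fin 5) (a b : Fin 5),
      covers (F v) a b ↔ (a, b) ∈ (P v).zip (P v).tail := by
    intro v a b
    rw [mem_zip_tail]
    constructor
    · rintro ⟨i, ha, hb⟩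
      refine ⟨(i : ℕ), by rw [key v]; omega, ?_, ?_⟩
      · simpa [hF] using ha
      · simpa [hF] using hb
    · rintro ⟨i, h, ha, hb⟩
      have hi : i < 4 := by rw [key v] at h; omega
      refine ⟨⟨i, hi⟩, ?_, ?_⟩
      · simpa [hF] using ha
      · simpa [hF] using hb
  have hcompat : ∀ v w : Fin 5, v ≠ w → compat (F v) (F w) := by
    intro v w hvw
    constructor
    · intro hEq
      obtain ⟨u, _, hu⟩ := hEnd (F v 4)
      exact hvw ((hu v (hlast v)).trans (hu w (by rw [hEq]; exact hlast w)).symm)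
    · rintro i hw
      have hv : covers (F v) (F v i.castSucc) (F v i.succ) := ⟨i, rfl, rfl⟩
      rw [hcovers] at hv hw
      obtain ⟨u, _, hu⟩ :=
        hArc' _ _ (ne_of_mem_zip_tail (hnd v) hv)
      exact hvw ((hu v hv).trans (hu w hw).symm)
  have hall : coverAll (F 0) (F 1) (F 2) (F 3) (F 4) := by
    intro a b hab
    obtain ⟨u, hu, _⟩ := hArc' a b hab
    have hc : covers (F u) a b := (hcovers u a b).2 hu
    fin_cases u
    · exact Or.inl hc
    · exact Or.inr (Or.inl hc)
    · exact Or.inr (Or.inr (Or.inl hc))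
    · exact Or.inr (Or.inr (Or.inr (Or.inl hc)))
    · exact Or.inr (Or.inr (Or.inr (Or.inr hc)))
  have hs := searchB_true (hvalid 0) (hvalid 1) (hvalid 2) (hvalid 3) (hvalid 4)
    (hcompat 0 1 (by decide)) (hcompat 0 2 (by decide)) (hcompat 0 3 (by decide))
    (hcompat 0 4 (by decide)) (hcompat 1 2 (by decide)) (hcompat 1 3 (by decide))
    (hcompat 1 4 (by decide)) (hcompat 2 3 (by decide)) (hcompat 2 4 (by decide))
    (hcompat 3 4 (by decide)) hall
  rw [search_false] at hs
  exact Bool.false_ne_true hs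
end

section
/- If G = G₁ ∪ G₂ with V(G₁) ∩ V(G₂) = {v}, and both G₁ and G₂ have an oriented perfect path double cover, then G has an oriented perfect path double cover. -/
namespace OPPDCaux
variable {α β : Type*}

/-- pairs of consecutive elements -/
def pairs (l : List α) : List (α × α) := l.zip l.tail

lemma pairs_map (f : α → β) (l : List α) :
    pairs (l.map f) = (pairs l).map (Prod.map f f) := by
  unfold pairs; rw [← List.map_tail, List.zip_map]

lemma pairs_append_cons (A B : List α) (x : α) :
    pairs (A ++ x :: B) = pairs (A ++ [x]) ++ pairs (x :: B) := by
  induction A with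
  | nil => simp [pairs]
  | cons a A ih =>
    cases A with
    | nil => simp [pairs]
    | cons a' A' =>
      simp only [List.cons_append, pairs, List.tail_cons] at ih ⊢
      simp only [List.zip_cons_cons] at *
      rw [List.cons_append, ih]

lemma pairs_glue {A B : List α} {x : α} (hA : A.getLast? = some x) (hB : B.head? = some x) :
    pairs (A ++ B.tail) = pairs A ++ pairs B := by
  obtain ⟨A₀, rfl⟩ := List.getLast?_eq_some_iff.mp hA
  have hBe : B = x :: B.tail := by cases B <;> simp_all
  rw [hBe]; simp only [List.tail_cons]
  rw [show A₀ ++ [x] ++ B.tail = A₀ ++ x :: B.tail by simp]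
  exact pairs_append_cons _ _ _

lemma rel_of_mem_pairs {R : α → α → Prop} {a b : α} :
    ∀ {l : List α}, l.Chain' R → (a, b) ∈ pairs l → R a b
  | [], _, h => by simp [pairs] at h
  | [x], _, h => by simp [pairs] at h
  | x :: y :: l, hc, h => by
    simp only [pairs, List.tail_cons, List.zip_cons_cons, List.mem_cons] at h
    rcases h with h | h
    · obtain ⟨rfl, rfl⟩ := Prod.mk.injEq .. ▸ h
      exact (List.isChain_cons_cons.mp hc).1
    · exact rel_of_mem_pairs (List.isChain_cons_cons.mp hc).2 h

lemma mem_of_mem_pairs {a b : α} {l : List α} (h : (a, b) ∈ pairs l) :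
    a ∈ l ∧ b ∈ l :=
  ⟨(List.of_mem_zip h).1, List.mem_of_mem_tail (List.of_mem_zip h).2⟩

lemma mem_pairs_map_iff {f : α → β} (hf : Function.Injective f) {l : List α} {x y : α} :
    (f x, f y) ∈ pairs (l.map f) ↔ (x, y) ∈ pairs l := by
  rw [pairs_map]
  constructor
  · intro h
    obtain ⟨⟨p, q⟩, hm, he⟩ := List.mem_map.mp h
    obtain ⟨h1, h2⟩ := Prod.mk.injEq .. ▸ he
    rwa [hf h1, hf h2] at hm
  · intro h; exact List.mem_map.mpr ⟨(x, y), h, rfl⟩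

end OPPDCaux

open OPPDCaux

/-- if `G` is the union of two subgraphs sharing exactly one
vertex `v`, each having an OPPDC, then `G` has an OPPDC. -/
theorem union_one_vertex_hasOPPDC {V : Type*} [Fintype V] (G : SimpleGraph V)
    (H₁ H₂ : G.Subgraph) (v : V)
    (hverts : H₁.verts ∩ H₂.verts = {v})
    (hunion : H₁ ⊔ H₂ = ⊤)
    (h₁ : HasOPPDC H₁.coe) (h₂ : HasOPPDC H₂.coe) :
    HasOPPDC G := by
  classical
  obtain ⟨P₁, hP₁, hE₁, hA₁⟩ := h₁
  obtain ⟨P₂, hP₂, hE₂, hA₂⟩ := h₂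
  have hv12 : v ∈ H₁.verts ∩ H₂.verts := hverts ▸ rfl
  have hv1 : v ∈ H₁.verts := hv12.1
  have hv2 : v ∈ H₂.verts := hv12.2
  have hmeet : ∀ w, w ∈ H₁.verts → w ∈ H₂.verts → w = v := by
    intro w hw1 hw2
    have : w ∈ H₁.verts ∩ H₂.verts := ⟨hw1, hw2⟩
    rwa [hverts] at this
  have hcover : ∀ w, w ∈ H₁.verts ∨ w ∈ H₂.verts := by
    intro w
    have h : w ∈ (H₁ ⊔ H₂).verts := by
      rw [hunion, SimpleGraph.Subgraph.verts_top]; trivial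
    rwa [SimpleGraph.Subgraph.verts_sup] at h
  have hadj : ∀ a b, G.Adj a b ↔ H₁.Adj a b ∨ H₂.Adj a b := by
    intro a b
    rw [← SimpleGraph.Subgraph.sup_adj, hunion, SimpleGraph.Subgraph.top_adj]
  have hnotboth : ∀ a b, G.Adj a b → ¬(H₁.Adj a b ∧ H₂.Adj a b) := by
    rintro a b hab ⟨ha1, ha2⟩
    have hav : a = v := hmeet a (H₁.edge_vert ha1) (H₂.edge_vert ha2)
    have hbv : b = v := hmeet b (H₁.edge_vert ha1.symm) (H₂.edge_vert ha2.symm)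
    exact hab.ne (hav.trans hbv.symm)
  set v₁ : H₁.verts := ⟨v, hv1⟩ with hv₁def
  set v₂ : H₂.verts := ⟨v, hv2⟩ with hv₂def
  set Q₁ : H₁.verts → List V := fun w => (P₁ w).map Subtype.val with hQ₁def
  set Q₂ : H₂.verts → List V := fun w => (P₂ w).map Subtype.val with hQ₂def
  -- basic properties of Q₁, Q₂
  have hQne₁ : ∀ w, Q₁ w ≠ [] := fun w h => (hP₁ w).1 (List.map_eq_nil_iff.mp h)
  have hQne₂ : ∀ w, Q₂ w ≠ [] := fun w h => (hP₂ w).1 (List.map_eq_nil_iff.mp h)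
  have hQnd₁ : ∀ w, (Q₁ w).Nodup := fun w => (hP₁ w).2.1.map Subtype.val_injective
  have hQnd₂ : ∀ w, (Q₂ w).Nodup := fun w => (hP₂ w).2.1.map Subtype.val_injective
  have hQch₁ : ∀ w, (Q₁ w).Chain' (fun a b => H₁.Adj a b) := by
    intro w
    rw [hQ₁def]; show List.IsChain _ (List.map _ _); rw [List.isChain_map]
    exact ((hP₁ w).2.2.1).imp (fun a b h => (SimpleGraph.Subgraph.coe_adj H₁ a b) ▸ h)
  have hQch₂ : ∀ w, (Q₂ w).Chain' (fun a b => H₂.Adj a b) := by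
    intro w
    rw [hQ₂def]; show List.IsChain _ (List.map _ _); rw [List.isChain_map]
    exact ((hP₂ w).2.2.1).imp (fun a b h => (SimpleGraph.Subgraph.coe_adj H₂ a b) ▸ h)
  have hQchG₁ : ∀ w, (Q₁ w).Chain' G.Adj := fun w => (hQch₁ w).imp (fun _ _ h => h.adj_sub)
  have hQchG₂ : ∀ w, (Q₂ w).Chain' G.Adj := fun w => (hQch₂ w).imp (fun _ _ h => h.adj_sub)
  have hQhd₁ : ∀ w, (Q₁ w).head? = some (w : V) := by
    intro w; rw [hQ₁def]; simp only [List.head?_map, (hP₁ w).2.2.2, Option.map_some]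
  have hQhd₂ : ∀ w, (Q₂ w).head? = some (w : V) := by
    intro w; rw [hQ₂def]; simp only [List.head?_map, (hP₂ w).2.2.2, Option.map_some]
  have hQmem₁ : ∀ w x, x ∈ Q₁ w → x ∈ H₁.verts := by
    intro w x hx
    obtain ⟨y, _, rfl⟩ := List.mem_map.mp hx
    exact y.2
  have hQmem₂ : ∀ w x, x ∈ Q₂ w → x ∈ H₂.verts := by
    intro w x hx
    obtain ⟨y, _, rfl⟩ := List.mem_map.mp hx
    exact y.2
  -- last elements
  set last₁ : H₁.verts → H₁.verts := fun w => (P₁ w).getLast ((hP₁ w).1) with hlast₁def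
  set last₂ : H₂.verts → H₂.verts := fun w => (P₂ w).getLast ((hP₂ w).1) with hlast₂def
  have hlast₁ : ∀ w, (P₁ w).getLast? = some (last₁ w) := fun w =>
    List.getLast?_eq_getLast _
  have hlast₂ : ∀ w, (P₂ w).getLast? = some (last₂ w) := fun w =>
    List.getLast?_eq_getLast _
  have hE₁' : ∀ z : H₁.verts, ∃! w, last₁ w = z := by
    intro z
    obtain ⟨w, hw, hq⟩ := hE₁ z
    rw [hlast₁ w] at hw
    refine ⟨w, Option.some_injective _ hw, fun y hy => hq y ?_⟩
    show (P₁ y).getLast? = some z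
    rw [hlast₁ y]
    exact congrArg some hy
  have hE₂' : ∀ z : H₂.verts, ∃! w, last₂ w = z := by
    intro z
    obtain ⟨w, hw, hq⟩ := hE₂ z
    rw [hlast₂ w] at hw
    refine ⟨w, Option.some_injective _ hw, fun y hy => hq y ?_⟩
    show (P₂ y).getLast? = some z
    rw [hlast₂ y]
    exact congrArg some hy
  have hQlast₁ : ∀ w, (Q₁ w).getLast? = some ((last₁ w : V)) := by
    intro w
    rw [hQ₁def]
    simp only [List.getLast?_map, hlast₁ w, Option.map_some]
  have hQlast₂ : ∀ w, (Q₂ w).getLast? = some ((last₂ w : V)) := by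
    intro w
    rw [hQ₂def]
    simp only [List.getLast?_map, hlast₂ w, Option.map_some]
  -- the path of the second cover ending at v
  obtain ⟨u, hu, huq⟩ := hE₂' v₂
  -- the combined family
  set P : V → List V := fun w =>
    if w = (u : V) then Q₂ u ++ (Q₁ v₁).tail
    else if w = v then Q₂ v₂
    else if h : w ∈ H₁.verts then Q₁ ⟨w, h⟩
    else Q₂ ⟨w, (hcover w).resolve_left h⟩ with hPdef
  have hPu : P (u : V) = Q₂ u ++ (Q₁ v₁).tail := by
    simp only [hPdef, if_true]
  have huv : (u : V) = v → u = v₂ := fun h => Subtype.ext h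
  have hPv : (u : V) ≠ v → P v = Q₂ v₂ := by
    intro h
    simp only [hPdef, if_neg (fun hh : v = (u : V) => h hh.symm), if_true]
  have hPw₁ : ∀ w : H₁.verts, (w : V) ≠ v → P (w : V) = Q₁ w := by
    intro w hw
    have h1 : (w : V) ≠ (u : V) := fun he => hw (hmeet _ w.2 (he ▸ u.2))
    simp only [hPdef]
    rw [if_neg h1, if_neg hw, dif_pos w.2]
  have hPw₂ : ∀ w : H₂.verts, w ≠ u → (w : V) ≠ v → P (w : V) = Q₂ w := by
    intro w hwu hwv
    have h1 : (w : V) ≠ (u : V) := fun he => hwu (Subtype.ext he)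
    have h2 : (w : V) ∉ H₁.verts := fun he => hwv (hmeet _ he w.2)
    simp only [hPdef]
    rw [if_neg h1, if_neg hwv, dif_neg h2]
  -- key computations about the glued path
  have hQuv : (Q₂ u).getLast? = some v := by rw [hQlast₂ u, hu]
  have hQ1head : Q₁ v₁ = v :: (Q₁ v₁).tail := by
    have := hQhd₁ v₁
    cases hq : Q₁ v₁ with
    | nil => exact absurd hq (hQne₁ v₁)
    | cons a l => rw [hq] at this; simp at this; simp [this, hv₁def]
  have hvnotmem : v ∉ (Q₁ v₁).tail := by
    intro hv
    have hnd := hQnd₁ v₁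
    rw [hQ1head] at hnd
    exact (List.nodup_cons.mp hnd).1 hv
  have hpairsPu : pairs (P (u : V)) = pairs (Q₂ u) ++ pairs (Q₁ v₁) := by
    rw [hPu]
    exact pairs_glue hQuv (hQhd₁ v₁)
  have hlastPu : (P (u : V)).getLast? = some ((last₁ v₁ : V)) := by
    rw [hPu]
    rcases eq_or_ne (Q₁ v₁).tail [] with h | h
    · have hQ1 : Q₁ v₁ = [v] := by rw [hQ1head, h]
      have : (last₁ v₁ : V) = v := by
        have := hQlast₁ v₁
        rw [hQ1] at this
        simpa using this.symm
      rw [h, List.append_nil, hQuv, this]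
    · rw [List.getLast?_append_of_ne_nil _ h, ← hQlast₁ v₁]
      conv_rhs => rw [hQ1head]
      rw [show v :: (Q₁ v₁).tail = [v] ++ (Q₁ v₁).tail from rfl,
        List.getLast?_append_of_ne_nil _ h]
  -- which paths' pairs are contained in which combined paths
  set idx₁ : H₁.verts → V := fun w => if (w : V) = v then (u : V) else (w : V) with hidx₁def
  have hsub₁ : ∀ w : H₁.verts, pairs (Q₁ w) ⊆ pairs (P (idx₁ w)) := by
    intro w
    simp only [hidx₁def]
    by_cases hw : (w : V) = v
    · have hwv : w = v₁ := Subtype.ext hw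
      rw [if_pos hw, hpairsPu, hwv]
      exact fun p hp => List.mem_append_right _ hp
    · rw [if_neg hw, hPw₁ w hw]
      exact fun p hp => hp
  have hsub₂ : ∀ w : H₂.verts, pairs (Q₂ w) ⊆ pairs (P (w : V)) := by
    intro w
    by_cases hwu : w = u
    · subst hwu
      rw [hpairsPu]
      exact fun p hp => List.mem_append_left _ hp
    · by_cases hwv : (w : V) = v
      · have hwv2 : w = v₂ := Subtype.ext hwv
        have huv' : (u : V) ≠ v := fun h => hwu (hwv2.trans (huv h).symm ▸ rfl : w = u)
        rw [hwv, hPv huv', hwv2]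
        exact fun p hp => hp
      · rw [hPw₂ w hwu hwv]
        exact fun p hp => hp
  have hlastidx₁ : ∀ w : H₁.verts, (P (idx₁ w)).getLast? = some ((last₁ w : V)) := by
    intro w
    simp only [hidx₁def]
    by_cases hw : (w : V) = v
    · have hwv : w = v₁ := Subtype.ext hw
      rw [if_pos hw, hwv]; exact hlastPu
    · rw [if_neg hw, hPw₁ w hw]; exact hQlast₁ w
  have hlastidx₂ : ∀ w : H₂.verts, w ≠ u → (P (w : V)).getLast? = some ((last₂ w : V)) := by
    intro w hwu
    by_cases hwv : (w : V) = v
    · have hwv2 : w = v₂ := Subtype.ext hwv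
      have huv' : (u : V) ≠ v := fun h => hwu (hwv2.trans (huv h).symm ▸ rfl : w = u)
      rw [hwv, hPv huv', hwv2]; exact hQlast₂ _
    · rw [hPw₂ w hwu hwv]; exact hQlast₂ w
  have hcons₁ : ∀ w : H₁.verts, Q₁ w = (w : V) :: (Q₁ w).tail := by
    intro w
    have := hQhd₁ w
    cases hq : Q₁ w with
    | nil => exact absurd hq (hQne₁ w)
    | cons a l => rw [hq] at this; simp at this; simp [this]
  have hcons₂ : ∀ w : H₂.verts, Q₂ w = (w : V) :: (Q₂ w).tail := by
    intro w
    have := hQhd₂ w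
    cases hq : Q₂ w with
    | nil => exact absurd hq (hQne₂ w)
    | cons a l => rw [hq] at this; simp at this; simp [this]
  -- index coverage
  have hidxv₁ : idx₁ v₁ = (u : V) := by
    simp only [hidx₁def, show (v₁ : V) = v from rfl, if_true]
  have hcase : ∀ w : V,
      (∃ w₁ : H₁.verts, w = idx₁ w₁) ∨ (∃ w₂ : H₂.verts, w₂ ≠ u ∧ w = (w₂ : V)) := by
    intro w
    by_cases h1 : w = (u : V)
    · exact Or.inl ⟨v₁, by rw [h1, hidxv₁]⟩
    · by_cases h2 : w = v
      · refine Or.inr ⟨v₂, fun hh => h1 ?_, h2⟩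
        rw [h2, ← hh]
      · by_cases h3 : w ∈ H₁.verts
        · refine Or.inl ⟨⟨w, h3⟩, ?_⟩
          simp only [hidx₁def]
          rw [if_neg (show ((⟨w, h3⟩ : H₁.verts) : V) ≠ v from h2)]
        · exact Or.inr ⟨⟨w, (hcover w).resolve_left h3⟩,
            fun hh => h1 (congrArg Subtype.val hh), rfl⟩
  -- pair coverage
  have hpaircov : ∀ (w : V) (p : V × V), p ∈ pairs (P w) →
      (∃ w₁ : H₁.verts, w = idx₁ w₁ ∧ p ∈ pairs (Q₁ w₁)) ∨
      (∃ w₂ : H₂.verts, w = (w₂ : V) ∧ p ∈ pairs (Q₂ w₂)) := by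
    intro w p hp
    by_cases h1 : w = (u : V)
    · subst h1
      rw [hpairsPu] at hp
      rcases List.mem_append.mp hp with h | h
      · exact Or.inr ⟨u, rfl, h⟩
      · exact Or.inl ⟨v₁, hidxv₁.symm, h⟩
    · by_cases h2 : w = v
      · subst h2
        rw [hPv (fun hh => h1 hh.symm)] at hp
        exact Or.inr ⟨v₂, rfl, hp⟩
      · by_cases h3 : w ∈ H₁.verts
        · rw [hPw₁ ⟨w, h3⟩ h2] at hp
          refine Or.inl ⟨⟨w, h3⟩, ?_, hp⟩
          simp only [hidx₁def]
          rw [if_neg (show ((⟨w, h3⟩ : H₁.verts) : V) ≠ v from h2)]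
        · rw [hPw₂ ⟨w, (hcover w).resolve_left h3⟩
            (fun hh => h1 (congrArg Subtype.val hh)) h2] at hp
          exact Or.inr ⟨⟨w, (hcover w).resolve_left h3⟩, rfl, hp⟩
  -- lifting pairs back to the subgraph level
  have hup₁ : ∀ (w₁ : H₁.verts) (a b : V), (a, b) ∈ pairs (Q₁ w₁) →
      ∃ (ha : a ∈ H₁.verts) (hb : b ∈ H₁.verts),
        (⟨a, ha⟩, (⟨b, hb⟩ : H₁.verts)) ∈ pairs (P₁ w₁) := by
    intro w₁ a b h
    have hm := mem_of_mem_pairs h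
    have ha := hQmem₁ w₁ a hm.1
    have hb := hQmem₁ w₁ b hm.2
    exact ⟨ha, hb, (mem_pairs_map_iff Subtype.val_injective).mp h⟩
  have hup₂ : ∀ (w₂ : H₂.verts) (a b : V), (a, b) ∈ pairs (Q₂ w₂) →
      ∃ (ha : a ∈ H₂.verts) (hb : b ∈ H₂.verts),
        (⟨a, ha⟩, (⟨b, hb⟩ : H₂.verts)) ∈ pairs (P₂ w₂) := by
    intro w₂ a b h
    have hm := mem_of_mem_pairs h
    have ha := hQmem₂ w₂ a hm.1
    have hb := hQmem₂ w₂ b hm.2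
    exact ⟨ha, hb, (mem_pairs_map_iff Subtype.val_injective).mp h⟩
  refine ⟨P, ?_, ?_, ?_⟩
  · -- each P w is a path starting at w
    intro w
    by_cases h1 : w = (u : V)
    · subst h1
      rw [hPu]
      refine ⟨?_, ?_, ?_, ?_⟩
      · intro h
        exact hQne₂ u (List.append_eq_nil_iff.mp h).1
      · refine (hQnd₂ u).append ((hQnd₁ v₁).sublist (List.tail_sublist _)) ?_
        intro x hx2 hx1
        have hxv : x = v := hmeet x (hQmem₁ v₁ x (List.mem_of_mem_tail hx1)) (hQmem₂ u x hx2)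
        exact hvnotmem (hxv ▸ hx1)
      · refine (hQchG₂ u).append ((hQchG₁ v₁).tail) ?_
        intro x hx y hy
        rw [hQuv] at hx
        obtain rfl : v = x := by simpa using hx
        have hch := hQchG₁ v₁
        rw [hQ1head] at hch
        exact (List.isChain_cons.mp hch).1 y hy
      · conv_lhs => rw [hcons₂ u]
        rfl
    · by_cases h2 : w = v
      · subst h2
        rw [hPv (fun hh => h1 hh.symm)]
        exact ⟨hQne₂ v₂, hQnd₂ v₂, hQchG₂ v₂, hQhd₂ v₂⟩
      · by_cases h3 : w ∈ H₁.verts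
        · rw [hPw₁ ⟨w, h3⟩ h2]
          exact ⟨hQne₁ _, hQnd₁ _, hQchG₁ _, hQhd₁ _⟩
        · rw [hPw₂ ⟨w, (hcover w).resolve_left h3⟩
            (fun hh => h1 (congrArg Subtype.val hh)) h2]
          exact ⟨hQne₂ _, hQnd₂ _, hQchG₂ _, hQhd₂ _⟩
  · -- each vertex is the last of exactly one path
    intro z
    by_cases hz : z ∈ H₁.verts
    · obtain ⟨t, ht, htq⟩ := hE₁' ⟨z, hz⟩
      refine ⟨idx₁ t, by show (P (idx₁ t)).getLast? = _; rw [hlastidx₁ t, ht], ?_⟩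
      intro y hy
      rcases hcase y with ⟨w₁, rfl⟩ | ⟨w₂, hw₂u, rfl⟩
      · rw [hlastidx₁ w₁] at hy
        have h : last₁ w₁ = ⟨z, hz⟩ := Subtype.ext (Option.some_injective _ hy)
        rw [htq w₁ h]
      · rw [hlastidx₂ w₂ hw₂u] at hy
        have hz2 : (last₂ w₂ : V) = z := Option.some_injective _ hy
        have hzv : z = v := hmeet z hz (hz2 ▸ (last₂ w₂).2)
        have hl : last₂ w₂ = v₂ := Subtype.ext (hz2.trans hzv)
        exact absurd (huq w₂ hl) hw₂u
    · have hz2 : z ∈ H₂.verts := (hcover z).resolve_left hz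
      have hzv : z ≠ v := fun h => hz (h ▸ hv1)
      obtain ⟨t, ht, htq⟩ := hE₂' ⟨z, hz2⟩
      have htu : t ≠ u := by
        intro h
        rw [h, hu] at ht
        exact hzv (congrArg Subtype.val ht).symm
      refine ⟨(t : V), by show (P (t : V)).getLast? = _; rw [hlastidx₂ t htu, ht], ?_⟩
      intro y hy
      rcases hcase y with ⟨w₁, rfl⟩ | ⟨w₂, hw₂u, rfl⟩
      · rw [hlastidx₁ w₁] at hy
        have h : (last₁ w₁ : V) = z := Option.some_injective _ hy
        exact absurd (h ▸ (last₁ w₁).2) hz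
      · rw [hlastidx₂ w₂ hw₂u] at hy
        have h : last₂ w₂ = ⟨z, hz2⟩ := Subtype.ext (Option.some_injective _ hy)
        rw [htq w₂ h]
  · -- each arc is in exactly one path
    intro a b hab
    show ∃! w, (a, b) ∈ pairs (P w)
    rcases (hadj a b).mp hab with h | h
    · have ha := H₁.edge_vert h
      have hb := H₁.edge_vert h.symm
      obtain ⟨t, ht, htq⟩ := hA₁ ⟨a, ha⟩ ⟨b, hb⟩
        (by rw [SimpleGraph.Subgraph.coe_adj]; exact h)
      refine ⟨idx₁ t, hsub₁ t ((mem_pairs_map_iff Subtype.val_injective).mpr ht), ?_⟩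
      intro y hy
      rcases hpaircov y _ hy with ⟨w₁, rfl, hm⟩ | ⟨w₂, rfl, hm⟩
      · obtain ⟨ha', hb', hm'⟩ := hup₁ w₁ a b hm
        rw [htq w₁ hm']
      · have h2 : H₂.Adj a b := rel_of_mem_pairs (hQch₂ w₂) hm
        exact absurd ⟨h, h2⟩ (hnotboth a b hab)
    · have ha := H₂.edge_vert h
      have hb := H₂.edge_vert h.symm
      obtain ⟨t, ht, htq⟩ := hA₂ ⟨a, ha⟩ ⟨b, hb⟩
        (by rw [SimpleGraph.Subgraph.coe_adj]; exact h)
      refine ⟨(t : V), hsub₂ t ((mem_pairs_map_iff Subtype.val_injective).mpr ht), ?_⟩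
      intro y hy
      rcases hpaircov y _ hy with ⟨w₁, rfl, hm⟩ | ⟨w₂, rfl, hm⟩
      · have h1 : H₁.Adj a b := rel_of_mem_pairs (hQch₁ w₁) hm
        exact absurd ⟨h1, h⟩ (hnotboth a b hab)
      · obtain ⟨ha', hb', hm'⟩ := hup₂ w₂ a b hm
        rw [htq w₂ hm']
end

section
/- If G is the union of two edge-disjoint graphs G₁ = G₂ = K₅ on disjoint vertex sets together with two additional edges uu' and vv', where u, v ∈ V(G₁) and u', v' ∈ V(G₂), then G has an oriented perfect path double cover. -/
/-- The canonical relation: two K₅'s joined at `(0, 0)` and `(1, 1)`. -/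
abbrev canonRel : Fin 5 ⊕ Fin 5 → Fin 5 ⊕ Fin 5 → Prop := fun a b =>
  (∃ x y : Fin 5, a = Sum.inl x ∧ b = Sum.inl y) ∨
  (∃ x y : Fin 5, a = Sum.inr x ∧ b = Sum.inr y) ∨
  (a = Sum.inl 0 ∧ b = Sum.inr 0) ∨
  (a = Sum.inl 1 ∧ b = Sum.inr 1)

instance canonRelDec : ∀ a b, Decidable (canonRel a b) := fun _ _ => inferInstanceAs
  (Decidable (_ ∨ _ ∨ _ ∨ _))

instance canonAdjDec : DecidableRel (SimpleGraph.fromRel canonRel).Adj := fun a b =>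
  decidable_of_iff _ (SimpleGraph.fromRel_adj canonRel a b).symm

/-- Kernel-friendly decidability of `List.Chain`. -/
def decChain {α : Type*} {R : α → α → Prop} [DecidableRel R] :
    ∀ (a : α) (l : List α), Decidable (List.Chain R a l)
  | _, [] => isTrue List.Chain.nil
  | _, b :: l =>
    @decidable_of_iff _ _ List.chain_cons.symm (@instDecidableAnd _ _ _ (decChain b l))

instance (priority := 2000) decChain' {α : Type*} {R : α → α → Prop} [DecidableRel R] :
    ∀ l : List α, Decidable (List.Chain' R l)
  | [] => isTrue List.IsChain.nil
  | a :: l => decChain a l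

/-- Kernel-friendly decidability of list membership. -/
def decMem {α : Type*} [DecidableEq α] (a : α) : ∀ l : List α, Decidable (a ∈ l)
  | [] => isFalse (by simp)
  | _ :: l => @decidable_of_iff _ _ List.mem_cons.symm (@instDecidableOr _ _ _ (decMem a l))

instance (priority := 2000) instDecMem {α : Type*} [DecidableEq α] (a : α) (l : List α) :
    Decidable (a ∈ l) := decMem a l

instance (priority := 2000) instDecImp {p q : Prop} [Decidable p] [Decidable q] :
    Decidable (p → q) :=
  if hp : p then decidable_of_iff q ⟨fun h _ => h, fun h => h hp⟩
  else isTrue fun h => absurd h hp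

/-- Explicit path system for the canonical case. -/
def canonP : Fin 5 ⊕ Fin 5 → List (Fin 5 ⊕ Fin 5)
  | .inl 0 => [.inl 0]
  | .inl 1 => [.inl 1, .inl 0, .inr 0, .inr 4, .inr 2, .inr 1, .inr 3]
  | .inl 2 => [.inl 2, .inl 0, .inl 3, .inl 4, .inl 1]
  | .inl 3 => [.inl 3, .inl 0, .inl 1, .inl 2, .inl 4]
  | .inl _ => [.inl 4, .inl 0, .inl 2, .inl 3, .inl 1, .inr 1, .inr 4, .inr 3, .inr 2]
  | .inr 0 => [.inr 0]
  | .inr 1 => [.inr 1, .inr 0, .inl 0, .inl 4, .inl 2, .inl 1, .inl 3]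
  | .inr 2 => [.inr 2, .inr 0, .inr 3, .inr 4, .inr 1]
  | .inr 3 => [.inr 3, .inr 0, .inr 1, .inr 2, .inr 4]
  | .inr _ => [.inr 4, .inr 0, .inr 2, .inr 3, .inr 1, .inl 1, .inl 4, .inl 3, .inl 2]

theorem canonical_OPPDC : HasOPPDC (SimpleGraph.fromRel canonRel) := by
  refine ⟨canonP, ?_, ?_, ?_⟩
  · decide
  · unfold ExistsUnique
    beta_reduce
    decide
  · unfold ExistsUnique
    beta_reduce
    decide

lemma zip_tail_map_mem {V W : Type*} (e : V ≃ W) (l : List V) (a b : W) :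
    (a, b) ∈ (l.map e).zip (l.map e).tail ↔ (e.symm a, e.symm b) ∈ l.zip l.tail := by
  rw [← List.map_tail, List.zip_map]
  constructor
  · rintro h
    obtain ⟨⟨x, y⟩, hx, hxy⟩ := List.mem_map.mp h
    obtain ⟨rfl, rfl⟩ : e x = a ∧ e y = b := by simpa [Prod.ext_iff] using hxy
    simpa using hx
  · intro h
    refine List.mem_map.mpr ⟨(e.symm a, e.symm b), h, by simp⟩

lemma HasOPPDC.map {V W : Type*} (e : V ≃ W) {G : SimpleGraph V} {G' : SimpleGraph W}
    (h : ∀ a b, G.Adj a b ↔ G'.Adj (e a) (e b)) (hG : HasOPPDC G) : HasOPPDC G' := by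
  obtain ⟨P, h1, h2, h3⟩ := hG
  refine ⟨fun w => (P (e.symm w)).map e, ?_, ?_, ?_⟩
  · intro w
    obtain ⟨hne, hnd, hch, hhd⟩ := h1 (e.symm w)
    refine ⟨by simpa using hne, hnd.map e.injective, ?_, ?_⟩
    · show List.IsChain _ (List.map _ _); rw [List.isChain_map]
      exact hch.imp (fun a b hab => (h a b).mp hab)
    · rw [List.head?_map, hhd]; simp
  · intro w
    obtain ⟨x, hx, hxu⟩ := h2 (e.symm w)
    refine ⟨e x, ?_, ?_⟩
    · simp [List.getLast?_map, hx]
    · intro y hy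
      have : (P (e.symm y)).getLast? = some (e.symm w) := by
        rw [List.getLast?_map] at hy
        rcases Option.map_eq_some_iff.mp hy with ⟨z, hz, hzw⟩
        rw [hz]
        simp [← hzw]
      have := hxu _ this
      have : e.symm y = e.symm (e x) := by simpa using this
      exact e.symm.injective this
  · intro a b hab
    have hab' : G.Adj (e.symm a) (e.symm b) := by
      rw [h]; simpa using hab
    obtain ⟨x, hx, hxu⟩ := h3 _ _ hab'
    refine ⟨e x, ?_, ?_⟩
    · simp only [zip_tail_map_mem]; simpa using hx
    · intro y hy
      simp only [zip_tail_map_mem] at hy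
      have := hxu _ hy
      have : e.symm y = e.symm (e x) := by simpa using this
      exact e.symm.injective this

lemma exists_perm_zero_one (a b : Fin 5) (h : a ≠ b) :
    ∃ σ : Equiv.Perm (Fin 5), σ 0 = a ∧ σ 1 = b := by
  refine ⟨(Equiv.swap 1 ((Equiv.swap 0 a) b)).trans (Equiv.swap 0 a), ?_, ?_⟩
  · have h1 : (Equiv.swap 1 ((Equiv.swap 0 a) b)) 0 = 0 := by
      apply Equiv.swap_apply_of_ne_of_ne
      · decide
      · intro h0
        apply h
        have h0' : (Equiv.swap 0 a) 0 = (Equiv.swap 0 a) ((Equiv.swap 0 a) b) :=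
          congrArg _ h0
        simpa using h0'
    simp [Equiv.trans_apply, h1]
  · simp [Equiv.trans_apply, Equiv.swap_apply_left]

/-- two disjoint copies of K₅ joined by two edges `uu'` and `vv'`
(with `u ≠ v`, `u' ≠ v'`) has an OPPDC. -/
theorem K5_K5_two_edges (u v u' v' : Fin 5) (huv : u ≠ v) (huv' : u' ≠ v') :
    HasOPPDC (SimpleGraph.fromRel
      (fun a b : Fin 5 ⊕ Fin 5 =>
        (∃ x y : Fin 5, a = Sum.inl x ∧ b = Sum.inl y) ∨
        (∃ x y : Fin 5, a = Sum.inr x ∧ b = Sum.inr y) ∨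
        (a = Sum.inl u ∧ b = Sum.inr u') ∨
        (a = Sum.inl v ∧ b = Sum.inr v'))) := by
  obtain ⟨σ, hσ0, hσ1⟩ := exists_perm_zero_one u v huv
  obtain ⟨τ, hτ0, hτ1⟩ := exists_perm_zero_one u' v' huv'
  refine HasOPPDC.map (Equiv.sumCongr σ τ) ?_ canonical_OPPDC
  intro a b
  rcases a with x | x <;> rcases b with y | y <;>
    simp only [canonRel, SimpleGraph.fromRel_adj, Equiv.sumCongr_apply, Sum.map_inl, Sum.map_inr,
      ← hσ0, ← hσ1, ← hτ0, ← hτ1, Sum.inl.injEq, Sum.inr.injEq, ne_eq,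
      EmbeddingLike.apply_eq_iff_eq, exists_and_left, exists_eq', true_and, and_true,
      reduceCtorEq, false_and, and_false, exists_const, or_false, false_or, exists_false] <;>
    tauto
end

section
/- Let G₁ = K₅ and let G₂ be a graph vertex-disjoint from G₁ that has an oriented perfect path double cover. If G is obtained from G₁ ∪ G₂ by adding two edges uu' and vv' with u, v ∈ V(G₁) and u', v' ∈ V(G₂), then G has an oriented perfect path double cover. -/
namespace OPPDCaux


def arcs {α : Type*} (l : List α) : List (α × α) := l.zip l.tail

lemma arcs_map {α β : Type*} (f : α → β) (l : List α) :
    arcs (l.map f) = (arcs l).map (Prod.map f f) := by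
  unfold arcs
  rw [show (l.map f).tail = l.tail.map f by cases l <;> simp, List.zip_map]

lemma mem_arcs_cons {α : Type*} {p : α × α} {x : α} {l : List α} :
    p ∈ arcs (x :: l) ↔ (∃ b ∈ l.head?, p = (x, b)) ∨ p ∈ arcs l := by
  cases l <;> simp [arcs]

lemma arcs_append {α : Type*} (l₁ l₂ : List α) :
    arcs (l₁ ++ l₂) =
      arcs l₁ ++ (Option.map₂ Prod.mk l₁.getLast? l₂.head?).toList ++ arcs l₂ := by
  induction l₁ with
  | nil => simp [arcs]
  | cons x t ih =>
    cases t with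
    | nil => cases l₂ <;> simp [arcs, Option.map₂]
    | cons y s =>
      have this : arcs (x :: (y :: s ++ l₂)) = (x, y) :: arcs (y :: s ++ l₂) := rfl
      rw [List.cons_append, this, ih]
      simp [arcs, List.getLast?_cons_cons]

lemma mem_arcs_append {α : Type*} {p : α × α} {l₁ l₂ : List α} :
    p ∈ arcs (l₁ ++ l₂) ↔
      p ∈ arcs l₁ ∨ (∃ a ∈ l₁.getLast?, ∃ b ∈ l₂.head?, p = (a, b)) ∨ p ∈ arcs l₂ := by
  have hm : p ∈ (Option.map₂ Prod.mk l₁.getLast? l₂.head?).toList ↔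
      ∃ a ∈ l₁.getLast?, ∃ b ∈ l₂.head?, p = (a, b) := by
    cases h1 : l₁.getLast? <;> cases h2 : l₂.head? <;> simp [Option.map₂, eq_comm]
  rw [arcs_append, List.mem_append, List.mem_append, hm]
  exact or_assoc

def A : List (Fin 5) := [0, 1]
def B : List (Fin 5) := [1, 0, 2, 3, 4]
def L : Fin 5 → List (Fin 5) := ![[0], [1,3,0,4,2], [2,4,3,1], [3,2,1,4,0], [4,1,2,0,3]]

def seg : Bool ⊕ Fin 5 → List (Fin 5)
  | .inl false => A
  | .inl true => B
  | .inr j => L j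

lemma base_propsL : ∀ j : Fin 5, (L j) ≠ [] ∧ (L j).Nodup ∧ (L j).Chain' (· ≠ ·)
    ∧ (L j).head? = some j := by
  intro j
  fin_cases j <;>
    exact ⟨by simp [L], by decide, by simp [L, List.Chain', List.isChain_cons_cons], by rfl⟩

lemma base_propsA : A ≠ [] ∧ A.Nodup ∧ A.Chain' (· ≠ ·) ∧ A.head? = some 0 :=
  ⟨by simp [A], by decide, by simp [A, List.Chain', List.isChain_cons_cons], rfl⟩

lemma base_propsB : B ≠ [] ∧ B.Nodup ∧ B.Chain' (· ≠ ·) ∧ B.head? = some 1 :=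
  ⟨by simp [B], by decide, by simp [B, List.Chain', List.isChain_cons_cons], rfl⟩

lemma base_last : (L 1).getLast? = some 2 ∧ (L 2).getLast? = some 1 ∧ (L 3).getLast? = some 0
    ∧ (L 4).getLast? = some 3 ∧ A.getLast? = some 1 ∧ B.getLast? = some 4
    ∧ (L 0).getLast? = some 0 := by decide

def hostk (a b : Fin 5) : Bool ⊕ Fin 5 :=
  if (a, b) ∈ arcs A then .inl false
  else if (a, b) ∈ arcs B then .inl true
  else if (a, b) ∈ arcs (L 1) then .inr 1
  else if (a, b) ∈ arcs (L 2) then .inr 2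
  else if (a, b) ∈ arcs (L 3) then .inr 3
  else .inr 4

lemma base_arcs : ∀ a b : Fin 5, a ≠ b →
    ((a, b) ∈ arcs (seg (hostk a b)) ∧
      (∀ bo : Bool, (a, b) ∈ arcs (seg (.inl bo)) → (.inl bo : Bool ⊕ Fin 5) = hostk a b) ∧
      (∀ j : Fin 5, (a, b) ∈ arcs (seg (.inr j)) → (.inr j : Bool ⊕ Fin 5) = hostk a b)) := by
  decide

lemma base_arcs_exu {a b : Fin 5} (h : a ≠ b) : ∃! k, (a, b) ∈ arcs (seg k) := by
  obtain ⟨h1, h2, h3⟩ := base_arcs a b h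
  exact ⟨hostk a b, h1, fun k hk => by cases k with
    | inl bo => exact h2 bo hk
    | inr j => exact h3 j hk⟩


lemma getLast?_cons_of_ne_nil {α : Type*} (a : α) {l : List α} (h : l ≠ []) :
    (a :: l).getLast? = l.getLast? := by
  cases l with
  | nil => exact absurd rfl h
  | cons b t => rw [List.getLast?_cons_cons]

def lastL : Fin 5 → Fin 5 := ![0, 2, 1, 0, 3]

lemma base_lastL : ∀ j, (L j).getLast? = some (lastL j) := by decide
lemma base_lastA : A.getLast? = some 1 := by decide
lemma base_lastB : B.getLast? = some 4 := by decide

end OPPDCaux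

open OPPDCaux

/-- K₅ and a graph `H` with an OPPDC, joined by two edges
`uu'` and `vv'`, give a graph with an OPPDC. -/
theorem K5_graph_two_edges {W : Type*} [Fintype W] (H : SimpleGraph W)
    (hH : HasOPPDC H)
    (u v : Fin 5) (u' v' : W) (huv : u ≠ v) (huv' : u' ≠ v') :
    HasOPPDC (SimpleGraph.fromRel
      (fun a b : Fin 5 ⊕ W =>
        (∃ x y : Fin 5, a = Sum.inl x ∧ b = Sum.inl y) ∨
        (∃ x y : W, a = Sum.inr x ∧ b = Sum.inr y ∧ H.Adj x y) ∨
        (a = Sum.inl u ∧ b = Sum.inr u') ∨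
        (a = Sum.inl v ∧ b = Sum.inr v'))) := by
  classical
  obtain ⟨P, hP1, hP2, hP3⟩ := hH
  set G : SimpleGraph (Fin 5 ⊕ W) := SimpleGraph.fromRel
      (fun a b : Fin 5 ⊕ W =>
        (∃ x y : Fin 5, a = Sum.inl x ∧ b = Sum.inl y) ∨
        (∃ x y : W, a = Sum.inr x ∧ b = Sum.inr y ∧ H.Adj x y) ∨
        (a = Sum.inl u ∧ b = Sum.inr u') ∨
        (a = Sum.inl v ∧ b = Sum.inr v')) with hG
  -- the relabeling equivalence
  set φ : Fin 5 ≃ Fin 5 :=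
    (Equiv.swap 1 ((Equiv.swap 0 u) v)).trans (Equiv.swap 0 u) with hφdef
  have ht0 : (Equiv.swap 0 u) v ≠ 0 := by
    intro h
    exact huv ((Equiv.swap 0 u).injective (h.trans (Equiv.swap_apply_right 0 u).symm)).symm
  have hφ0 : φ 0 = u := by
    have h1 : Equiv.swap 1 ((Equiv.swap 0 u) v) 0 = 0 :=
      Equiv.swap_apply_of_ne_of_ne (by decide) (Ne.symm ht0)
    simp [hφdef, h1]
  have hφ1 : φ 1 = v := by
    simp [hφdef]
  set c : Fin 5 := φ 2 with hc
  have hcu : c ≠ u := by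
    rw [hc, ← hφ0]; exact fun h => absurd (φ.injective h) (by decide)
  have hcv : c ≠ v := by
    rw [hc, ← hφ1]; exact fun h => absurd (φ.injective h) (by decide)
  set f : Fin 5 → Fin 5 ⊕ W := fun x => Sum.inl (φ x) with hfdef
  have hfinj : Function.Injective f := fun a b h =>
    φ.injective (Sum.inl_injective h)
  -- adjacency lemmas
  have adj_ll : ∀ a b : Fin 5, a ≠ b → G.Adj (.inl a) (.inl b) := by
    intro a b hab
    rw [hG, SimpleGraph.fromRel_adj]
    exact ⟨by simpa using hab, Or.inl (Or.inl ⟨a, b, rfl, rfl⟩)⟩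
  have adj_rr : ∀ a b : W, H.Adj a b → G.Adj (.inr a) (.inr b) := by
    intro a b hab
    rw [hG, SimpleGraph.fromRel_adj]
    exact ⟨by simpa using hab.ne, Or.inl (Or.inr (Or.inl ⟨a, b, rfl, rfl, hab⟩))⟩
  have adj_rr' : ∀ a b : W, G.Adj (.inr a) (.inr b) → H.Adj a b := by
    intro a b hab
    rw [hG, SimpleGraph.fromRel_adj] at hab
    obtain ⟨-, h | h⟩ := hab <;>
      rcases h with ⟨x, y, hx, hy⟩ | ⟨x, y, hx, hy, hxy⟩ | ⟨hx, hy⟩ | ⟨hx, hy⟩ <;>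
      first
        | (cases hx; done)
        | (cases hy; done)
        | (injection hx with hx'; injection hy with hy'; subst hx'; subst hy';
           first | exact hxy | exact hxy.symm)
  have adj_lu : G.Adj (.inl u) (.inr u') := by
    rw [hG, SimpleGraph.fromRel_adj]
    exact ⟨by simp, Or.inl (Or.inr (Or.inr (Or.inl ⟨rfl, rfl⟩)))⟩
  have adj_lv : G.Adj (.inl v) (.inr v') := by
    rw [hG, SimpleGraph.fromRel_adj]
    exact ⟨by simp, Or.inl (Or.inr (Or.inr (Or.inr ⟨rfl, rfl⟩)))⟩
  have adj_lr : ∀ (a : Fin 5) (b : W), G.Adj (.inl a) (.inr b) →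
      (a = u ∧ b = u') ∨ (a = v ∧ b = v') := by
    intro a b hab
    rw [hG, SimpleGraph.fromRel_adj] at hab
    obtain ⟨-, h | h⟩ := hab <;>
      rcases h with ⟨x, y, hx, hy⟩ | ⟨x, y, hx, hy, hxy⟩ | ⟨hx, hy⟩ | ⟨hx, hy⟩ <;>
      first
        | (cases hx; done)
        | (cases hy; done)
        | (injection hx with h1; injection hy with h2; exact Or.inl ⟨h1, h2⟩)
        | (injection hx with h1; injection hy with h2; exact Or.inr ⟨h1, h2⟩)
  -- heads and tails of the H-paths
  have hPcons : ∀ w : W, ∃ t, P w = w :: t := by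
    intro w
    obtain ⟨h1, -, -, h4⟩ := hP1 w
    cases hPw : P w with
    | nil => exact absurd hPw h1
    | cons x t =>
      rw [hPw] at h4
      have hx : x = w := by simpa using h4
      exact ⟨t, by rw [hx]⟩
  have hPlast : ∀ w : W, ∃ y, (P w).getLast? = some y := by
    intro w
    exact Option.isSome_iff_exists.mp (List.getLast?_isSome.mpr (hP1 w).1)
  -- the path system
  set Q : Fin 5 ⊕ W → List (Fin 5 ⊕ W) := fun z =>
    Sum.elim
      (fun i => if i = u then .inl u :: (P u').map .inr
        else if i = c then (L 2).map f ++ (P v').map .inr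
        else (L (φ.symm i)).map f)
      (fun w => if w = u' then .inr u' :: A.map f
        else if w = v' then .inr v' :: B.map f
        else (P w).map .inr) z with hQdef
  have hQu : Q (.inl u) = .inl u :: (P u').map .inr := by simp [hQdef]
  have hQc : Q (.inl c) = (L 2).map f ++ (P v').map .inr := by simp [hQdef, hcu]
  have hQi : ∀ i : Fin 5, i ≠ u → i ≠ c → Q (.inl i) = (L (φ.symm i)).map f := by
    intro i h1 h2; simp [hQdef, h1, h2]
  have hQu' : Q (.inr u') = .inr u' :: A.map f := by simp [hQdef]
  have hQv' : Q (.inr v') = .inr v' :: B.map f := by simp [hQdef, Ne.symm huv']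
  have hQw : ∀ w : W, w ≠ u' → w ≠ v' → Q (.inr w) = (P w).map .inr := by
    intro w h1 h2; simp [hQdef, h1, h2]
  refine ⟨Q, ?_, ?_, ?_⟩
  · rintro (i | w)
    · by_cases hiu : i = u
      · subst hiu
        obtain ⟨t, hPu'⟩ := hPcons u'
        rw [hQu]
        refine ⟨by simp, ?_, ?_, by simp⟩
        · rw [List.nodup_cons]
          exact ⟨by simp, ((hP1 u').2.1).map Sum.inr_injective⟩
        · have hch : List.Chain' G.Adj ((P u').map .inr) :=
            (List.isChain_map _).mpr (((hP1 u').2.2.1).imp fun a b h => adj_rr a b h)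
          rw [List.Chain', List.isChain_cons]
          refine ⟨?_, hch⟩
          intro z hz
          rw [List.head?_map, (hP1 u').2.2.2] at hz
          obtain rfl : Sum.inr u' = z := by simpa using hz
          exact adj_lu
      · by_cases hic : i = c
        · subst hic
          obtain ⟨hL1, hL2, hL3, hL4⟩ := base_propsL 2
          rw [hQc]
          refine ⟨by simp [hL1], ?_, ?_, ?_⟩
          · rw [List.nodup_append]
            refine ⟨hL2.map hfinj, ((hP1 v').2.1).map Sum.inr_injective, ?_⟩
            intro z hz1 z' hz2 hzz; subst hzz
            rw [List.mem_map] at hz1 hz2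
            obtain ⟨a, -, rfl⟩ := hz1
            obtain ⟨b, -, hb⟩ := hz2
            exact nomatch hb
          · rw [List.Chain', List.isChain_append]
            refine ⟨(List.isChain_map _).mpr (hL3.imp fun a b h => adj_ll _ _ (φ.injective.ne h)),
              (List.isChain_map _).mpr (((hP1 v').2.2.1).imp fun a b h => adj_rr a b h), ?_⟩
            intro z hz y hy
            rw [List.getLast?_map, base_lastL 2] at hz
            rw [List.head?_map, (hP1 v').2.2.2] at hy
            obtain rfl : f (lastL 2) = z := by simpa using hz
            obtain rfl : Sum.inr v' = y := by simpa using hy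
            have h12 : lastL 2 = 1 := by decide
            simpa [hfdef, h12, hφ1] using adj_lv
          · rw [List.head?_append, List.head?_map, hL4]
            show some (f 2) = some (Sum.inl c)
            rw [hc]
        · rw [hQi i hiu hic]
          obtain ⟨h1, h2, h3, h4⟩ := base_propsL (φ.symm i)
          refine ⟨by simpa using h1, h2.map hfinj,
            (List.isChain_map _).mpr (h3.imp fun a b h => adj_ll _ _ (φ.injective.ne h)), ?_⟩
          rw [List.head?_map, h4]
          show some (Sum.inl (φ (φ.symm i))) = _
          rw [Equiv.apply_symm_apply]
    · by_cases hwu : w = u'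
      · rw [hwu]
        obtain ⟨hA1, hA2, hA3, hA4⟩ := base_propsA
        rw [hQu']
        refine ⟨by simp, ?_, ?_, rfl⟩
        · rw [List.nodup_cons]
          refine ⟨?_, hA2.map hfinj⟩
          rw [List.mem_map]
          rintro ⟨a, -, ha⟩
          exact nomatch ha
        · rw [List.Chain', List.isChain_cons]
          refine ⟨?_, (List.isChain_map _).mpr (hA3.imp fun a b h => adj_ll _ _ (φ.injective.ne h))⟩
          intro z hz
          rw [List.head?_map, hA4] at hz
          obtain rfl : f 0 = z := by simpa using hz
          simpa [hfdef, hφ0] using adj_lu.symm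
      · by_cases hwv : w = v'
        · rw [hwv]
          obtain ⟨hB1, hB2, hB3, hB4⟩ := base_propsB
          rw [hQv']
          refine ⟨by simp, ?_, ?_, rfl⟩
          · rw [List.nodup_cons]
            refine ⟨?_, hB2.map hfinj⟩
            rw [List.mem_map]
            rintro ⟨a, -, ha⟩
            exact nomatch ha
          · rw [List.Chain', List.isChain_cons]
            refine ⟨?_, (List.isChain_map _).mpr (hB3.imp fun a b h => adj_ll _ _ (φ.injective.ne h))⟩
            intro z hz
            rw [List.head?_map, hB4] at hz
            obtain rfl : f 1 = z := by simpa using hz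
            simpa [hfdef, hφ1] using adj_lv.symm
        · rw [hQw w hwu hwv]
          refine ⟨by simpa using (hP1 w).1, ((hP1 w).2.1).map Sum.inr_injective,
            (List.isChain_map _).mpr (((hP1 w).2.2.1).imp fun a b h => adj_rr a b h), ?_⟩
          rw [List.head?_map, (hP1 w).2.2.2]
          rfl
  · -- ends
    have lastQul : (Q (.inl u)).getLast? = Option.map Sum.inr (P u').getLast? := by
      rw [hQu, getLast?_cons_of_ne_nil _ (by simpa using (hP1 u').1), List.getLast?_map]
    have lastQc : (Q (.inl c)).getLast? = Option.map Sum.inr (P v').getLast? := by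
      obtain ⟨y, hy⟩ := hPlast v'
      rw [hQc, List.getLast?_append, List.getLast?_map, hy]
      simp
    have lastQi : ∀ i, i ≠ u → i ≠ c →
        (Q (.inl i)).getLast? = some (f (lastL (φ.symm i))) := by
      intro i h1 h2
      rw [hQi i h1 h2, List.getLast?_map, base_lastL]
      rfl
    have lastQu' : (Q (.inr u')).getLast? = some (f 1) := by
      rw [hQu', getLast?_cons_of_ne_nil _ (by simp [A]), List.getLast?_map, base_lastA]
      rfl
    have lastQv' : (Q (.inr v')).getLast? = some (f 4) := by
      rw [hQv', getLast?_cons_of_ne_nil _ (by simp [B]), List.getLast?_map, base_lastB]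
      rfl
    have lastQw : ∀ w, w ≠ u' → w ≠ v' →
        (Q (.inr w)).getLast? = Option.map Sum.inr (P w).getLast? := by
      intro w h1 h2
      rw [hQw w h1 h2, List.getLast?_map]
    have hne_u : ∀ m : Fin 5, m ≠ 0 → φ m ≠ u := fun m h => by
      rw [← hφ0]; exact φ.injective.ne h
    have hne_c : ∀ m : Fin 5, m ≠ 2 → φ m ≠ c := fun m h => by
      rw [hc]; exact φ.injective.ne h
    have hlv : lastL 0 = 0 ∧ lastL 1 = 2 ∧ lastL 2 = 1 ∧ lastL 3 = 0 ∧ lastL 4 = 3 := by decide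
    rintro (x | y)
    · obtain ⟨j, rfl⟩ : ∃ j, x = φ j := ⟨φ.symm x, (φ.apply_symm_apply x).symm⟩
      have keyi : ∀ i, i ≠ u → i ≠ c → (Q (.inl i)).getLast? = some (Sum.inl (φ j)) →
          lastL (φ.symm i) = j ∧ φ.symm i ≠ 0 ∧ φ.symm i ≠ 2 := by
        intro i h1 h2 hz
        rw [lastQi i h1 h2] at hz
        refine ⟨by simpa [hfdef] using hz, ?_, ?_⟩
        · intro h0
          apply h1
          rw [← hφ0, ← h0, Equiv.apply_symm_apply]
        · intro h0
          apply h2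
          rw [hc, ← h0, Equiv.apply_symm_apply]
      set hostE : Fin 5 → Fin 5 ⊕ W :=
        ![Sum.inl (φ 3), Sum.inr u', Sum.inl (φ 1), Sum.inl (φ 4), Sum.inr v'] with hostEdef
      refine ⟨hostE j, ?_, ?_⟩
      · fin_cases j
        · show (Q (hostE 0)).getLast? = _
          have : hostE 0 = Sum.inl (φ 3) := rfl
          rw [this, lastQi (φ 3) (hne_u 3 (by decide)) (hne_c 3 (by decide))]
          simp [hfdef, Equiv.symm_apply_apply, hlv.2.2.2.1]
        · show (Q (hostE 1)).getLast? = _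
          have : hostE 1 = Sum.inr u' := rfl
          rw [this, lastQu']
          simp [hfdef]
        · show (Q (hostE 2)).getLast? = _
          have : hostE 2 = Sum.inl (φ 1) := rfl
          rw [this, lastQi (φ 1) (hne_u 1 (by decide)) (hne_c 1 (by decide))]
          simp [hfdef, Equiv.symm_apply_apply, hlv.2.1]
        · show (Q (hostE 3)).getLast? = _
          have : hostE 3 = Sum.inl (φ 4) := rfl
          rw [this, lastQi (φ 4) (hne_u 4 (by decide)) (hne_c 4 (by decide))]
          simp [hfdef, Equiv.symm_apply_apply, hlv.2.2.2.2]
        · show (Q (hostE 4)).getLast? = _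
          have : hostE 4 = Sum.inr v' := rfl
          rw [this, lastQv']
          simp [hfdef]
      · rintro (i | w) hz
        · by_cases h1 : i = u
          · exfalso
            rw [h1, lastQul] at hz
            obtain ⟨y, hy⟩ := hPlast u'
            rw [hy] at hz
            simp at hz
          · by_cases h2 : i = c
            · exfalso
              rw [h2, lastQc] at hz
              obtain ⟨y, hy⟩ := hPlast v'
              rw [hy] at hz
              simp at hz
            · obtain ⟨h3, h4, h5⟩ := keyi i h1 h2 hz
              have hfact := (by decide : ∀ a j : Fin 5, a ≠ 0 → a ≠ 2 → lastL a = j →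
                (j = 0 ∧ a = 3) ∨ (j = 2 ∧ a = 1) ∨ (j = 3 ∧ a = 4)) (φ.symm i) j h4 h5 h3
              rcases hfact with ⟨rfl, ha⟩ | ⟨rfl, ha⟩ | ⟨rfl, ha⟩
              · have he : hostE 0 = Sum.inl (φ 3) := rfl
                rw [he, ← ha, Equiv.apply_symm_apply]
              · have he : hostE 2 = Sum.inl (φ 1) := rfl
                rw [he, ← ha, Equiv.apply_symm_apply]
              · have he : hostE 3 = Sum.inl (φ 4) := rfl
                rw [he, ← ha, Equiv.apply_symm_apply]
        · by_cases h1 : w = u'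
          · rw [h1, lastQu'] at hz
            have h6 : (1 : Fin 5) = j := by simpa [hfdef] using hz
            subst h6
            rw [h1]
            rfl
          · by_cases h2 : w = v'
            · rw [h2, lastQv'] at hz
              have h6 : (4 : Fin 5) = j := by simpa [hfdef] using hz
              subst h6
              rw [h2]
              rfl
            · exfalso
              rw [lastQw w h1 h2] at hz
              obtain ⟨y, hy⟩ := hPlast w
              rw [hy] at hz
              simp at hz
    · obtain ⟨w₀, hw₀, hw₀u⟩ := hP2 y
      by_cases h0u : w₀ = u'
      · refine ⟨.inl u, by show (Q (Sum.inl u)).getLast? = _; rw [lastQul, ← h0u, hw₀]; rfl, ?_⟩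
        rintro (i | w) hz
        · by_cases h1 : i = u
          · rw [h1]
          · by_cases h2 : i = c
            · exfalso
              rw [h2, lastQc] at hz
              obtain ⟨yy, hy⟩ := hPlast v'
              rw [hy] at hz
              have : yy = y := by simpa using hz
              subst this
              exact huv' (h0u ▸ (hw₀u v' hy)).symm
            · exfalso
              rw [lastQi i h1 h2] at hz
              simp [hfdef] at hz
        · exfalso
          by_cases h1 : w = u'
          · rw [h1, lastQu'] at hz
            simp [hfdef] at hz
          · by_cases h2 : w = v'
            · rw [h2, lastQv'] at hz
              simp [hfdef] at hz
            · rw [lastQw w h1 h2] at hz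
              obtain ⟨yy, hy⟩ := hPlast w
              rw [hy] at hz
              have : yy = y := by simpa using hz
              subst this
              exact h1 ((hw₀u w hy).trans h0u)
      · by_cases h0v : w₀ = v'
        · refine ⟨.inl c, by show (Q (Sum.inl c)).getLast? = _; rw [lastQc, ← h0v, hw₀]; rfl, ?_⟩
          rintro (i | w) hz
          · by_cases h1 : i = u
            · exfalso
              rw [h1, lastQul] at hz
              obtain ⟨yy, hy⟩ := hPlast u'
              rw [hy] at hz
              have : yy = y := by simpa using hz
              subst this
              exact huv' ((hw₀u u' hy).trans h0v)
            · by_cases h2 : i = c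
              · rw [h2]
              · exfalso
                rw [lastQi i h1 h2] at hz
                simp [hfdef] at hz
          · exfalso
            by_cases h1 : w = u'
            · rw [h1, lastQu'] at hz
              simp [hfdef] at hz
            · by_cases h2 : w = v'
              · rw [h2, lastQv'] at hz
                simp [hfdef] at hz
              · rw [lastQw w h1 h2] at hz
                obtain ⟨yy, hy⟩ := hPlast w
                rw [hy] at hz
                have : yy = y := by simpa using hz
                subst this
                exact h2 ((hw₀u w hy).trans h0v)
        · refine ⟨.inr w₀, by show (Q (Sum.inr w₀)).getLast? = _; rw [lastQw w₀ h0u h0v, hw₀]; rfl, ?_⟩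
          rintro (i | w) hz
          · by_cases h1 : i = u
            · exfalso
              rw [h1, lastQul] at hz
              obtain ⟨yy, hy⟩ := hPlast u'
              rw [hy] at hz
              have : yy = y := by simpa using hz
              subst this
              exact h0u ((hw₀u u' hy) ▸ rfl)
            · by_cases h2 : i = c
              · exfalso
                rw [h2, lastQc] at hz
                obtain ⟨yy, hy⟩ := hPlast v'
                rw [hy] at hz
                have : yy = y := by simpa using hz
                subst this
                exact h0v ((hw₀u v' hy) ▸ rfl)
              · exfalso
                rw [lastQi i h1 h2] at hz
                simp [hfdef] at hz
          · by_cases h1 : w = u'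
            · exfalso
              rw [h1, lastQu'] at hz
              simp [hfdef] at hz
            · by_cases h2 : w = v'
              · exfalso
                rw [h2, lastQv'] at hz
                simp [hfdef] at hz
              · rw [lastQw w h1 h2] at hz
                obtain ⟨yy, hy⟩ := hPlast w
                rw [hy] at hz
                have : yy = y := by simpa using hz
                subst this
                rw [hw₀u w hy]
  · -- arcs
    have hAhead : A.head? = some 0 := by decide
    have hBhead : B.head? = some 1 := by decide
    have hL2last : (L 2).getLast? = some 1 := by decide
    have hne_u : ∀ m : Fin 5, m ≠ 0 → φ m ≠ u := fun m h => by
      rw [← hφ0]; exact φ.injective.ne h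
    have hne_c : ∀ m : Fin 5, m ≠ 2 → φ m ≠ c := fun m h => by
      rw [hc]; exact φ.injective.ne h
    have arc_u : ∀ p : (Fin 5 ⊕ W) × (Fin 5 ⊕ W), p ∈ arcs (Q (.inl u)) ↔
        p = (.inl u, .inr u') ∨ ∃ q ∈ arcs (P u'), Prod.map Sum.inr Sum.inr q = p := by
      intro p
      rw [hQu, mem_arcs_cons, arcs_map, List.mem_map, List.head?_map, (hP1 u').2.2.2]
      simp
    have arc_c : ∀ p : (Fin 5 ⊕ W) × (Fin 5 ⊕ W), p ∈ arcs (Q (.inl c)) ↔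
        (∃ q ∈ arcs (L 2), Prod.map f f q = p) ∨ p = (.inl v, .inr v') ∨
          ∃ q ∈ arcs (P v'), Prod.map Sum.inr Sum.inr q = p := by
      intro p
      rw [hQc, mem_arcs_append, arcs_map, arcs_map, List.mem_map, List.mem_map,
        List.getLast?_map, hL2last, List.head?_map, (hP1 v').2.2.2]
      simp [hfdef, hφ1]
    have arc_i : ∀ i, i ≠ u → i ≠ c → ∀ p : (Fin 5 ⊕ W) × (Fin 5 ⊕ W),
        p ∈ arcs (Q (.inl i)) ↔ ∃ q ∈ arcs (L (φ.symm i)), Prod.map f f q = p := by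
      intro i h1 h2 p
      rw [hQi i h1 h2, arcs_map, List.mem_map]
    have arc_u' : ∀ p : (Fin 5 ⊕ W) × (Fin 5 ⊕ W), p ∈ arcs (Q (.inr u')) ↔
        p = (.inr u', .inl u) ∨ ∃ q ∈ arcs A, Prod.map f f q = p := by
      intro p
      rw [hQu', mem_arcs_cons, arcs_map, List.mem_map, List.head?_map, hAhead]
      simp [hfdef, hφ0]
    have arc_v' : ∀ p : (Fin 5 ⊕ W) × (Fin 5 ⊕ W), p ∈ arcs (Q (.inr v')) ↔
        p = (.inr v', .inl v) ∨ ∃ q ∈ arcs B, Prod.map f f q = p := by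
      intro p
      rw [hQv', mem_arcs_cons, arcs_map, List.mem_map, List.head?_map, hBhead]
      simp [hfdef, hφ1]
    have arc_w : ∀ w, w ≠ u' → w ≠ v' → ∀ p : (Fin 5 ⊕ W) × (Fin 5 ⊕ W),
        p ∈ arcs (Q (.inr w)) ↔ ∃ q ∈ arcs (P w), Prod.map Sum.inr Sum.inr q = p := by
      intro w h1 h2 p
      rw [hQw w h1 h2, arcs_map, List.mem_map]
    have finv : ∀ (q : Fin 5 × Fin 5) (x y : Fin 5), Prod.map f f q = (Sum.inl x, Sum.inl y) →
        q = (φ.symm x, φ.symm y) := by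
      rintro ⟨q1, q2⟩ x y h
      rw [Prod.ext_iff] at h
      obtain ⟨h1, h2⟩ := h
      have h1' : φ q1 = x := Sum.inl_injective h1
      have h2' : φ q2 = y := Sum.inl_injective h2
      rw [Prod.ext_iff]
      exact ⟨by rw [← h1', Equiv.symm_apply_apply], by rw [← h2', Equiv.symm_apply_apply]⟩
    have rinv : ∀ (q : W × W) (x y : W),
        Prod.map (Sum.inr : W → Fin 5 ⊕ W) (Sum.inr : W → Fin 5 ⊕ W) q = (Sum.inr x, Sum.inr y) → q = (x, y) := by
      rintro ⟨q1, q2⟩ x y h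
      rw [Prod.ext_iff] at h
      exact Prod.ext (Sum.inr_injective h.1) (Sum.inr_injective h.2)
    set hostG : Bool ⊕ Fin 5 → Fin 5 ⊕ W :=
      Sum.elim (fun bb => bif bb then Sum.inr v' else Sum.inr u') (fun j => Sum.inl (φ j))
      with hostGdef
    rintro (x | x) (y | y) hadj
    · -- inl-inl
      have hxy : x ≠ y := fun h => hadj.ne (by rw [h])
      have hxy' : φ.symm x ≠ φ.symm y := fun h => hxy (by simpa using congrArg φ h)
      obtain ⟨k, hk, hku⟩ := base_arcs_exu hxy'
      refine ⟨hostG k, ?_, ?_⟩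
      · rcases k with bb | j
        · cases bb
          · exact (arc_u' _).mpr (Or.inr ⟨(φ.symm x, φ.symm y), hk, by simp [hfdef]⟩)
          · exact (arc_v' _).mpr (Or.inr ⟨(φ.symm x, φ.symm y), hk, by simp [hfdef]⟩)
        · by_cases hj0 : j = 0
          · exfalso
            subst hj0
            simp [seg, L, arcs] at hk
          · by_cases hj2 : j = 2
            · subst hj2
              exact (arc_c _).mpr (Or.inl ⟨(φ.symm x, φ.symm y), hk, by simp [hfdef]⟩)
            · refine (arc_i (φ j) (hne_u j hj0) (hne_c j hj2) _).mpr
                ⟨(φ.symm x, φ.symm y), ?_, by simp [hfdef]⟩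
              rw [Equiv.symm_apply_apply]
              exact hk
      · rintro (i | w) hz
        · by_cases h1 : i = u
          · exfalso
            subst h1
            rcases (arc_u _).mp hz with h | ⟨q, hq, hq2⟩
            · simp at h
            · simp [Prod.ext_iff] at hq2
          · by_cases h2 : i = c
            · subst h2
              rcases (arc_c _).mp hz with ⟨q, hq, hq2⟩ | h | ⟨q, hq, hq2⟩
              · obtain rfl := finv q x y hq2
                rw [← hku (.inr 2) hq]
                rfl
              · simp at h
              · simp [Prod.ext_iff] at hq2
            · obtain ⟨q, hq, hq2⟩ := (arc_i i h1 h2 _).mp hz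
              obtain rfl := finv q x y hq2
              rw [← hku (.inr (φ.symm i)) hq]
              show Sum.inl i = Sum.inl (φ (φ.symm i))
              rw [Equiv.apply_symm_apply]
        · by_cases h1 : w = u'
          · rcases (arc_u' _).mp (h1 ▸ hz) with h | ⟨q, hq, hq2⟩
            · simp at h
            · obtain rfl := finv q x y hq2
              rw [← hku (.inl false) hq, h1]
              rfl
          · by_cases h2 : w = v'
            · rcases (arc_v' _).mp (h2 ▸ hz) with h | ⟨q, hq, hq2⟩
              · simp at h
              · obtain rfl := finv q x y hq2
                rw [← hku (.inl true) hq, h2]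
                rfl
            · exfalso
              obtain ⟨q, hq, hq2⟩ := (arc_w w h1 h2 _).mp hz
              simp [Prod.ext_iff] at hq2
    · -- inl-inr
      rcases adj_lr x y hadj with ⟨hx, hy⟩ | ⟨hx, hy⟩
      all_goals rw [hx, hy]
      · refine ⟨.inl u, (arc_u _).mpr (Or.inl rfl), ?_⟩
        rintro (i | w) hz
        · by_cases h1 : i = u
          · rw [h1]
          · by_cases h2 : i = c
            · exfalso
              subst h2
              rcases (arc_c _).mp hz with ⟨q, hq, hq2⟩ | h | ⟨q, hq, hq2⟩
              · simp [hfdef, Prod.ext_iff] at hq2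
              · rw [Prod.ext_iff] at h
                exact huv (Sum.inl_injective h.1)
              · simp [Prod.ext_iff] at hq2
            · exfalso
              obtain ⟨q, hq, hq2⟩ := (arc_i i h1 h2 _).mp hz
              simp [hfdef, Prod.ext_iff] at hq2
        · exfalso
          by_cases h1 : w = u'
          · rcases (arc_u' _).mp (h1 ▸ hz) with h | ⟨q, hq, hq2⟩
            · simp at h
            · simp [hfdef, Prod.ext_iff] at hq2
          · by_cases h2 : w = v'
            · rcases (arc_v' _).mp (h2 ▸ hz) with h | ⟨q, hq, hq2⟩
              · simp at h
              · simp [hfdef, Prod.ext_iff] at hq2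
            · obtain ⟨q, hq, hq2⟩ := (arc_w w h1 h2 _).mp hz
              simp [Prod.ext_iff] at hq2
      · refine ⟨.inl c, (arc_c _).mpr (Or.inr (Or.inl rfl)), ?_⟩
        rintro (i | w) hz
        · by_cases h1 : i = u
          · exfalso
            subst h1
            rcases (arc_u _).mp hz with h | ⟨q, hq, hq2⟩
            · rw [Prod.ext_iff] at h
              exact huv (Sum.inl_injective h.1).symm
            · simp [Prod.ext_iff] at hq2
          · by_cases h2 : i = c
            · rw [h2]
            · exfalso
              obtain ⟨q, hq, hq2⟩ := (arc_i i h1 h2 _).mp hz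
              simp [hfdef, Prod.ext_iff] at hq2
        · exfalso
          by_cases h1 : w = u'
          · rcases (arc_u' _).mp (h1 ▸ hz) with h | ⟨q, hq, hq2⟩
            · simp at h
            · simp [hfdef, Prod.ext_iff] at hq2
          · by_cases h2 : w = v'
            · rcases (arc_v' _).mp (h2 ▸ hz) with h | ⟨q, hq, hq2⟩
              · simp at h
              · simp [hfdef, Prod.ext_iff] at hq2
            · obtain ⟨q, hq, hq2⟩ := (arc_w w h1 h2 _).mp hz
              simp [Prod.ext_iff] at hq2
    · -- inr-inl
      rcases adj_lr y x hadj.symm with ⟨hy, hx⟩ | ⟨hy, hx⟩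
      all_goals rw [hx, hy]
      · refine ⟨.inr u', (arc_u' _).mpr (Or.inl rfl), ?_⟩
        rintro (i | w) hz
        · exfalso
          by_cases h1 : i = u
          · subst h1
            rcases (arc_u _).mp hz with h | ⟨q, hq, hq2⟩
            · simp at h
            · simp [Prod.ext_iff] at hq2
          · by_cases h2 : i = c
            · subst h2
              rcases (arc_c _).mp hz with ⟨q, hq, hq2⟩ | h | ⟨q, hq, hq2⟩
              · simp [hfdef, Prod.ext_iff] at hq2
              · simp at h
              · simp [Prod.ext_iff] at hq2
            · obtain ⟨q, hq, hq2⟩ := (arc_i i h1 h2 _).mp hz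
              simp [hfdef, Prod.ext_iff] at hq2
        · by_cases h1 : w = u'
          · rw [h1]
          · by_cases h2 : w = v'
            · exfalso
              rcases (arc_v' _).mp (h2 ▸ hz) with h | ⟨q, hq, hq2⟩
              · rw [Prod.ext_iff] at h
                exact huv' (Sum.inr_injective h.1)
              · simp [hfdef, Prod.ext_iff] at hq2
            · exfalso
              obtain ⟨q, hq, hq2⟩ := (arc_w w h1 h2 _).mp hz
              simp [Prod.ext_iff] at hq2
      · refine ⟨.inr v', (arc_v' _).mpr (Or.inl rfl), ?_⟩
        rintro (i | w) hz
        · exfalso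
          by_cases h1 : i = u
          · subst h1
            rcases (arc_u _).mp hz with h | ⟨q, hq, hq2⟩
            · simp at h
            · simp [Prod.ext_iff] at hq2
          · by_cases h2 : i = c
            · subst h2
              rcases (arc_c _).mp hz with ⟨q, hq, hq2⟩ | h | ⟨q, hq, hq2⟩
              · simp [hfdef, Prod.ext_iff] at hq2
              · simp at h
              · simp [Prod.ext_iff] at hq2
            · obtain ⟨q, hq, hq2⟩ := (arc_i i h1 h2 _).mp hz
              simp [hfdef, Prod.ext_iff] at hq2
        · by_cases h1 : w = u'
          · exfalso
            rcases (arc_u' _).mp (h1 ▸ hz) with h | ⟨q, hq, hq2⟩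
            · rw [Prod.ext_iff] at h
              exact huv' (Sum.inr_injective h.1).symm
            · simp [hfdef, Prod.ext_iff] at hq2
          · by_cases h2 : w = v'
            · rw [h2]
            · exfalso
              obtain ⟨q, hq, hq2⟩ := (arc_w w h1 h2 _).mp hz
              simp [Prod.ext_iff] at hq2
    · -- inr-inr
      have hxy := adj_rr' x y hadj
      obtain ⟨w₀, hw₀, hw₀u⟩ := hP3 x y hxy
      have hw₀' : (x, y) ∈ arcs (P w₀) := hw₀
      by_cases h0u : w₀ = u'
      · refine ⟨.inl u, (arc_u _).mpr (Or.inr ⟨(x, y), h0u ▸ hw₀', rfl⟩), ?_⟩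
        rintro (i | w) hz
        · by_cases h1 : i = u
          · rw [h1]
          · by_cases h2 : i = c
            · exfalso
              subst h2
              rcases (arc_c _).mp hz with ⟨q, hq, hq2⟩ | h | ⟨q, hq, hq2⟩
              · simp [hfdef, Prod.ext_iff] at hq2
              · simp at h
              · obtain rfl := rinv q x y hq2
                exact huv' ((hw₀u v' hq).trans h0u).symm
            · exfalso
              obtain ⟨q, hq, hq2⟩ := (arc_i i h1 h2 _).mp hz
              simp [hfdef, Prod.ext_iff] at hq2
        · exfalso
          by_cases h1 : w = u'
          · rcases (arc_u' _).mp (h1 ▸ hz) with h | ⟨q, hq, hq2⟩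
            · simp at h
            · simp [hfdef, Prod.ext_iff] at hq2
          · by_cases h2 : w = v'
            · rcases (arc_v' _).mp (h2 ▸ hz) with h | ⟨q, hq, hq2⟩
              · simp at h
              · simp [hfdef, Prod.ext_iff] at hq2
            · obtain ⟨q, hq, hq2⟩ := (arc_w w h1 h2 _).mp hz
              obtain rfl := rinv q x y hq2
              exact h1 ((hw₀u w hq).trans h0u)
      · by_cases h0v : w₀ = v'
        · refine ⟨.inl c, (arc_c _).mpr (Or.inr (Or.inr ⟨(x, y), h0v ▸ hw₀', rfl⟩)), ?_⟩
          rintro (i | w) hz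
          · by_cases h1 : i = u
            · exfalso
              subst h1
              rcases (arc_u _).mp hz with h | ⟨q, hq, hq2⟩
              · simp at h
              · obtain rfl := rinv q x y hq2
                exact huv' ((hw₀u u' hq).trans h0v)
            · by_cases h2 : i = c
              · rw [h2]
              · exfalso
                obtain ⟨q, hq, hq2⟩ := (arc_i i h1 h2 _).mp hz
                simp [hfdef, Prod.ext_iff] at hq2
          · exfalso
            by_cases h1 : w = u'
            · rcases (arc_u' _).mp (h1 ▸ hz) with h | ⟨q, hq, hq2⟩
              · simp at h
              · simp [hfdef, Prod.ext_iff] at hq2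
            · by_cases h2 : w = v'
              · rcases (arc_v' _).mp (h2 ▸ hz) with h | ⟨q, hq, hq2⟩
                · simp at h
                · simp [hfdef, Prod.ext_iff] at hq2
              · obtain ⟨q, hq, hq2⟩ := (arc_w w h1 h2 _).mp hz
                obtain rfl := rinv q x y hq2
                exact h2 ((hw₀u w hq).trans h0v)
        · refine ⟨.inr w₀, (arc_w w₀ h0u h0v _).mpr ⟨(x, y), hw₀', rfl⟩, ?_⟩
          rintro (i | w) hz
          · exfalso
            by_cases h1 : i = u
            · subst h1
              rcases (arc_u _).mp hz with h | ⟨q, hq, hq2⟩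
              · simp at h
              · obtain rfl := rinv q x y hq2
                exact h0u (hw₀u u' hq).symm
            · by_cases h2 : i = c
              · subst h2
                rcases (arc_c _).mp hz with ⟨q, hq, hq2⟩ | h | ⟨q, hq, hq2⟩
                · simp [hfdef, Prod.ext_iff] at hq2
                · simp at h
                · obtain rfl := rinv q x y hq2
                  exact h0v (hw₀u v' hq).symm
              · obtain ⟨q, hq, hq2⟩ := (arc_i i h1 h2 _).mp hz
                simp [hfdef, Prod.ext_iff] at hq2
          · by_cases h1 : w = u'
            · exfalso
              rcases (arc_u' _).mp (h1 ▸ hz) with h | ⟨q, hq, hq2⟩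
              · simp at h
              · simp [hfdef, Prod.ext_iff] at hq2
            · by_cases h2 : w = v'
              · exfalso
                rcases (arc_v' _).mp (h2 ▸ hz) with h | ⟨q, hq, hq2⟩
                · simp at h
                · simp [hfdef, Prod.ext_iff] at hq2
              · obtain ⟨q, hq, hq2⟩ := (arc_w w h1 h2 _).mp hz
                obtain rfl := rinv q x y hq2
                rw [hw₀u w hq]
end

section
/- Let G₁ and G₂ be vertex-disjoint graphs each having an oriented perfect path double cover, and let G be obtained from G₁ ∪ G₂ by adding two vertex-disjoint edges uv and wx with u, w ∈ V(G₁) and v, x ∈ V(G₂). Then G has an oriented perfect path double cover. -/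
namespace OPPDCAux

variable {α β : Type*}

lemma head?_append_toList (l : List α) (hl : l ≠ []) (o : Option α) :
    (l ++ o.toList).head? = l.head? := by
  cases l with
  | nil => exact absurd rfl hl
  | cons a t => simp

lemma getLast?_append_toList (l : List α) (o : Option α) :
    (l ++ o.toList).getLast? = o.or l.getLast? := by
  cases o with
  | none => simp
  | some c => simp

lemma nodup_append_toList (l : List α) (o : Option α) (hl : l.Nodup)
    (ho : ∀ c ∈ o, c ∉ l) : (l ++ o.toList).Nodup := by
  cases o with
  | none => simpa
  | some c =>
    simp only [Option.toList_some, List.nodup_append]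
    exact ⟨hl, List.nodup_singleton c, by simpa using fun a ha (hac : a = c) => ho c rfl (hac ▸ ha)⟩

lemma chain'_append_toList {R : α → α → Prop} (l : List α) (o : Option α)
    (hl : l.Chain' R) (ho : ∀ c ∈ o, ∀ a ∈ l.getLast?, R a c) :
    (l ++ o.toList).Chain' R := by
  cases o with
  | none => simpa
  | some c =>
    unfold List.Chain'
    rw [Option.toList_some, List.isChain_append]
    refine ⟨hl, List.isChain_singleton c, fun a ha b hb => ?_⟩
    simp only [List.head?_cons, Option.mem_def, Option.some_inj] at hb
    subst hb
    exact ho c rfl a ha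

lemma zipTail_concat (c : α) : ∀ (l : List α),
    (l ++ [c]).zip (l ++ [c]).tail
      = l.zip l.tail ++ (l.getLast?.map (fun a => (a, c))).toList
  | [] => by simp
  | [a] => by simp
  | a :: b :: t => by
      have ih := zipTail_concat c (b :: t)
      simp only [List.cons_append, List.zip_cons_cons, List.tail_cons] at ih ⊢
      rw [ih, List.getLast?_cons_cons]

lemma zipTail_concat' (l : List α) (m c : α) (hm : l.getLast? = some m) :
    (l ++ [c]).zip (l ++ [c]).tail = l.zip l.tail ++ [(m, c)] := by
  rw [zipTail_concat, hm]; rfl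

lemma zipTail_map (l : List α) (f : α → β) :
    (l.map f).zip (l.map f).tail = (l.zip l.tail).map (Prod.map f f) := by
  rw [← List.map_tail, List.zip_map]

lemma arcs_mem_aux (l : List α) (f : α → β) (m : α) (hm : l.getLast? = some m)
    (o : Option β) (a b : β) :
    ((a, b) ∈ ((l.map f) ++ o.toList).zip ((l.map f) ++ o.toList).tail) ↔
      ((∃ s t, a = f s ∧ b = f t ∧ (s, t) ∈ l.zip l.tail) ∨
        (∃ c, o = some c ∧ a = f m ∧ b = c)) := by
  cases o with
  | none =>
    simp only [Option.toList_none, List.append_nil, zipTail_map]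
    constructor
    · intro h
      obtain ⟨⟨s, t⟩, hst, he⟩ := List.mem_map.mp h
      exact Or.inl ⟨s, t, (Prod.ext_iff.mp he.symm).1, (Prod.ext_iff.mp he.symm).2, hst⟩
    · rintro (⟨s, t, rfl, rfl, hst⟩ | ⟨c, hc, _⟩)
      · exact List.mem_map.mpr ⟨(s, t), hst, rfl⟩
      · simp at hc
  | some c =>
    rw [Option.toList_some,
      zipTail_concat' _ (f m) c (by rw [List.getLast?_map, hm]; rfl), zipTail_map,
      List.mem_append, List.mem_singleton]
    constructor
    · rintro (h | h)
      · obtain ⟨⟨s, t⟩, hst, he⟩ := List.mem_map.mp h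
        exact Or.inl ⟨s, t, (Prod.ext_iff.mp he.symm).1, (Prod.ext_iff.mp he.symm).2, hst⟩
      · exact Or.inr ⟨c, rfl, (Prod.ext_iff.mp h).1, (Prod.ext_iff.mp h).2⟩
    · rintro (⟨s, t, rfl, rfl, hst⟩ | ⟨c', hc', rfl, hb⟩)
      · exact Or.inl (List.mem_map.mpr ⟨(s, t), hst, rfl⟩)
      · obtain rfl : c = c' := Option.some_inj.mp hc'
        exact Or.inr (by rw [hb])

end OPPDCAux

open OPPDCAux

set_option maxHeartbeats 1000000 in
/-- two vertex-disjoint graphs each having an OPPDC, joined by two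
vertex-disjoint edges `uv` and `wx`, give a graph with an OPPDC. -/
theorem two_graphs_two_edges {V₁ V₂ : Type*} [Fintype V₁] [Fintype V₂]
    (G₁ : SimpleGraph V₁) (G₂ : SimpleGraph V₂)
    (h₁ : HasOPPDC G₁) (h₂ : HasOPPDC G₂)
    (u w : V₁) (v x : V₂) (huw : u ≠ w) (hvx : v ≠ x) :
    HasOPPDC (SimpleGraph.fromRel
      (fun a b : V₁ ⊕ V₂ =>
        (∃ p q : V₁, a = Sum.inl p ∧ b = Sum.inl q ∧ G₁.Adj p q) ∨
        (∃ p q : V₂, a = Sum.inr p ∧ b = Sum.inr q ∧ G₂.Adj p q) ∨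
        (a = Sum.inl u ∧ b = Sum.inr v) ∨
        (a = Sum.inl w ∧ b = Sum.inr x))) := by
  classical
  obtain ⟨P₁, hP₁, hL₁, hA₁⟩ := h₁
  obtain ⟨P₂, hP₂, hL₂, hA₂⟩ := h₂
  set G' := SimpleGraph.fromRel
      (fun a b : V₁ ⊕ V₂ =>
        (∃ p q : V₁, a = Sum.inl p ∧ b = Sum.inl q ∧ G₁.Adj p q) ∨
        (∃ p q : V₂, a = Sum.inr p ∧ b = Sum.inr q ∧ G₂.Adj p q) ∨
        (a = Sum.inl u ∧ b = Sum.inr v) ∨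
        (a = Sum.inl w ∧ b = Sum.inr x)) with hG'
  have adj11 : ∀ s t, G₁.Adj s t → G'.Adj (Sum.inl s) (Sum.inl t) := by
    intro s t h
    rw [hG', SimpleGraph.fromRel_adj]
    exact ⟨by simpa using h.ne, Or.inl (Or.inl ⟨s, t, rfl, rfl, h⟩)⟩
  have adj22 : ∀ s t, G₂.Adj s t → G'.Adj (Sum.inr s) (Sum.inr t) := by
    intro s t h
    rw [hG', SimpleGraph.fromRel_adj]
    exact ⟨by simpa using h.ne, Or.inl (Or.inr (Or.inl ⟨s, t, rfl, rfl, h⟩))⟩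
  have adjuv : G'.Adj (Sum.inl u) (Sum.inr v) := by
    rw [hG', SimpleGraph.fromRel_adj]
    exact ⟨by simp, Or.inl (Or.inr (Or.inr (Or.inl ⟨rfl, rfl⟩)))⟩
  have adjwx : G'.Adj (Sum.inl w) (Sum.inr x) := by
    rw [hG', SimpleGraph.fromRel_adj]
    exact ⟨by simp, Or.inl (Or.inr (Or.inr (Or.inr ⟨rfl, rfl⟩)))⟩
  set ℓ₁ : V₁ → V₁ := fun p => (P₁ p).getLast (hP₁ p).1 with hℓ₁def
  set ℓ₂ : V₂ → V₂ := fun p => (P₂ p).getLast (hP₂ p).1 with hℓ₂def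
  have hgl₁ : ∀ p, (P₁ p).getLast? = some (ℓ₁ p) :=
    fun p => List.getLast?_eq_getLast _
  have hgl₂ : ∀ p, (P₂ p).getLast? = some (ℓ₂ p) :=
    fun p => List.getLast?_eq_getLast _
  have hL₁' : ∀ t, ∃! p, ℓ₁ p = t := by
    intro t
    obtain ⟨p, hp, hup⟩ := hL₁ t
    refine ⟨p, Option.some_inj.mp ((hgl₁ p).symm.trans hp), fun q hq => hup q ?_⟩
    show (P₁ q).getLast? = some t
    rw [hgl₁ q]
    exact congrArg some hq
  have hL₂' : ∀ t, ∃! p, ℓ₂ p = t := by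
    intro t
    obtain ⟨p, hp, hup⟩ := hL₂ t
    refine ⟨p, Option.some_inj.mp ((hgl₂ p).symm.trans hp), fun q hq => hup q ?_⟩
    show (P₂ q).getLast? = some t
    rw [hgl₂ q]
    exact congrArg some hq
  set E₁ : V₁ → Option (V₁ ⊕ V₂) := fun p =>
    if ℓ₁ p = u then some (Sum.inr v) else if ℓ₁ p = w then some (Sum.inr x) else none
    with hE₁
  set E₂ : V₂ → Option (V₁ ⊕ V₂) := fun p =>
    if ℓ₂ p = v then some (Sum.inl u) else if ℓ₂ p = x then some (Sum.inl w) else none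
    with hE₂
  set Q : V₁ ⊕ V₂ → List (V₁ ⊕ V₂) :=
    Sum.elim (fun p => (P₁ p).map Sum.inl ++ (E₁ p).toList)
      (fun p => (P₂ p).map Sum.inr ++ (E₂ p).toList) with hQdef
  have hQ₁ : ∀ p, Q (Sum.inl p) = (P₁ p).map Sum.inl ++ (E₁ p).toList := fun p => rfl
  have hQ₂ : ∀ p, Q (Sum.inr p) = (P₂ p).map Sum.inr ++ (E₂ p).toList := fun p => rfl
  have hml₁ : ∀ p, ((P₁ p).map Sum.inl : List (V₁ ⊕ V₂)).getLast? = some (Sum.inl (ℓ₁ p)) :=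
    fun p => by rw [List.getLast?_map, hgl₁]; rfl
  have hml₂ : ∀ p, ((P₂ p).map Sum.inr : List (V₁ ⊕ V₂)).getLast? = some (Sum.inr (ℓ₂ p)) :=
    fun p => by rw [List.getLast?_map, hgl₂]; rfl
  have hE₁some : ∀ p c, E₁ p = some c ↔
      ((ℓ₁ p = u ∧ c = Sum.inr v) ∨ (ℓ₁ p = w ∧ c = Sum.inr x)) := by
    intro p c
    simp only [hE₁]
    split_ifs with h1 h2
    · constructor
      · intro hc
        exact Or.inl ⟨h1, (Option.some_inj.mp hc).symm⟩
      · rintro (⟨_, rfl⟩ | ⟨hw', rfl⟩)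
        · rfl
        · exact absurd (h1.symm.trans hw') huw
    · constructor
      · intro hc
        exact Or.inr ⟨h2, (Option.some_inj.mp hc).symm⟩
      · rintro (⟨hu', rfl⟩ | ⟨_, rfl⟩)
        · exact absurd hu' h1
        · rfl
    · simp [h1, h2]
  have hE₂some : ∀ p c, E₂ p = some c ↔
      ((ℓ₂ p = v ∧ c = Sum.inl u) ∨ (ℓ₂ p = x ∧ c = Sum.inl w)) := by
    intro p c
    simp only [hE₂]
    split_ifs with h1 h2
    · constructor
      · intro hc
        exact Or.inl ⟨h1, (Option.some_inj.mp hc).symm⟩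
      · rintro (⟨_, rfl⟩ | ⟨hw', rfl⟩)
        · rfl
        · exact absurd (h1.symm.trans hw') hvx
    · constructor
      · intro hc
        exact Or.inr ⟨h2, (Option.some_inj.mp hc).symm⟩
      · rintro (⟨hu', rfl⟩ | ⟨_, rfl⟩)
        · exact absurd hu' h1
        · rfl
    · simp [h1, h2]
  have hArc₁ : ∀ p (a b : V₁ ⊕ V₂),
      ((a, b) ∈ (Q (Sum.inl p)).zip (Q (Sum.inl p)).tail) ↔
        ((∃ s t, a = Sum.inl s ∧ b = Sum.inl t ∧ (s, t) ∈ (P₁ p).zip (P₁ p).tail) ∨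
          (ℓ₁ p = u ∧ a = Sum.inl u ∧ b = Sum.inr v) ∨
          (ℓ₁ p = w ∧ a = Sum.inl w ∧ b = Sum.inr x)) := by
    intro p a b
    rw [hQ₁, arcs_mem_aux (P₁ p) Sum.inl (ℓ₁ p) (hgl₁ p) (E₁ p) a b]
    have h2 : (∃ c, E₁ p = some c ∧ a = Sum.inl (ℓ₁ p) ∧ b = c) ↔
        ((ℓ₁ p = u ∧ a = Sum.inl u ∧ b = Sum.inr v) ∨
          (ℓ₁ p = w ∧ a = Sum.inl w ∧ b = Sum.inr x)) := by
      constructor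
      · rintro ⟨c, hc, rfl, hb⟩
        rcases (hE₁some p c).mp hc with ⟨h1, rfl⟩ | ⟨h1, rfl⟩
        · exact Or.inl ⟨h1, by rw [h1], hb⟩
        · exact Or.inr ⟨h1, by rw [h1], hb⟩
      · rintro (⟨h1, rfl, rfl⟩ | ⟨h1, rfl, rfl⟩)
        · exact ⟨Sum.inr v, (hE₁some p _).mpr (Or.inl ⟨h1, rfl⟩), by rw [h1], rfl⟩
        · exact ⟨Sum.inr x, (hE₁some p _).mpr (Or.inr ⟨h1, rfl⟩), by rw [h1], rfl⟩
    rw [h2]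
  have hArc₂ : ∀ p (a b : V₁ ⊕ V₂),
      ((a, b) ∈ (Q (Sum.inr p)).zip (Q (Sum.inr p)).tail) ↔
        ((∃ s t, a = Sum.inr s ∧ b = Sum.inr t ∧ (s, t) ∈ (P₂ p).zip (P₂ p).tail) ∨
          (ℓ₂ p = v ∧ a = Sum.inr v ∧ b = Sum.inl u) ∨
          (ℓ₂ p = x ∧ a = Sum.inr x ∧ b = Sum.inl w)) := by
    intro p a b
    rw [hQ₂, arcs_mem_aux (P₂ p) Sum.inr (ℓ₂ p) (hgl₂ p) (E₂ p) a b]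
    have h2 : (∃ c, E₂ p = some c ∧ a = Sum.inr (ℓ₂ p) ∧ b = c) ↔
        ((ℓ₂ p = v ∧ a = Sum.inr v ∧ b = Sum.inl u) ∨
          (ℓ₂ p = x ∧ a = Sum.inr x ∧ b = Sum.inl w)) := by
      constructor
      · rintro ⟨c, hc, rfl, hb⟩
        rcases (hE₂some p c).mp hc with ⟨h1, rfl⟩ | ⟨h1, rfl⟩
        · exact Or.inl ⟨h1, by rw [h1], hb⟩
        · exact Or.inr ⟨h1, by rw [h1], hb⟩
      · rintro (⟨h1, rfl, rfl⟩ | ⟨h1, rfl, rfl⟩)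
        · exact ⟨Sum.inl u, (hE₂some p _).mpr (Or.inl ⟨h1, rfl⟩), by rw [h1], rfl⟩
        · exact ⟨Sum.inl w, (hE₂some p _).mpr (Or.inr ⟨h1, rfl⟩), by rw [h1], rfl⟩
    rw [h2]
  refine ⟨Q, ?_, ?_, ?_⟩
  · -- each Q a is a nonempty nodup chain starting at a
    rintro (p | p)
    · obtain ⟨hne, hnd, hch, hhd⟩ := hP₁ p
      have hmne : ((P₁ p).map Sum.inl : List (V₁ ⊕ V₂)) ≠ [] := by simp [hne]
      rw [hQ₁]
      refine ⟨by simp [hne], ?_, ?_, ?_⟩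
      · refine nodup_append_toList _ _ (hnd.map Sum.inl_injective) ?_
        intro c hc hmem
        rw [Option.mem_def, hE₁some] at hc
        rcases hc with ⟨_, rfl⟩ | ⟨_, rfl⟩ <;> simp at hmem
      · refine chain'_append_toList _ _ ?_ ?_
        · unfold List.Chain'
          rw [List.isChain_map]
          exact hch.imp (fun {a b} h => adj11 a b h)
        · intro c hc a ha
          rw [hml₁ p, Option.mem_def, Option.some_inj] at ha
          subst ha
          rw [Option.mem_def, hE₁some] at hc
          rcases hc with ⟨h1, rfl⟩ | ⟨h1, rfl⟩
          · rw [h1]; exact adjuv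
          · rw [h1]; exact adjwx
      · rw [head?_append_toList _ hmne, List.head?_map, hhd]; rfl
    · obtain ⟨hne, hnd, hch, hhd⟩ := hP₂ p
      have hmne : ((P₂ p).map Sum.inr : List (V₁ ⊕ V₂)) ≠ [] := by simp [hne]
      rw [hQ₂]
      refine ⟨by simp [hne], ?_, ?_, ?_⟩
      · refine nodup_append_toList _ _ (hnd.map Sum.inr_injective) ?_
        intro c hc hmem
        rw [Option.mem_def, hE₂some] at hc
        rcases hc with ⟨_, rfl⟩ | ⟨_, rfl⟩ <;> simp at hmem
      · refine chain'_append_toList _ _ ?_ ?_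
        · unfold List.Chain'
          rw [List.isChain_map]
          exact hch.imp (fun {a b} h => adj22 a b h)
        · intro c hc a ha
          rw [hml₂ p, Option.mem_def, Option.some_inj] at ha
          subst ha
          rw [Option.mem_def, hE₂some] at hc
          rcases hc with ⟨h1, rfl⟩ | ⟨h1, rfl⟩
          · rw [h1]; exact adjuv.symm
          · rw [h1]; exact adjwx.symm
      · rw [head?_append_toList _ hmne, List.head?_map, hhd]; rfl
  · -- each vertex is the end of exactly one path
    intro y
    set Last : V₁ ⊕ V₂ → V₁ ⊕ V₂ :=
      Sum.elim
        (fun p => if ℓ₁ p = u then Sum.inr v else if ℓ₁ p = w then Sum.inr x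
          else Sum.inl (ℓ₁ p))
        (fun p => if ℓ₂ p = v then Sum.inl u else if ℓ₂ p = x then Sum.inl w
          else Sum.inr (ℓ₂ p)) with hLast
    have hQl : ∀ a, (Q a).getLast? = some (Last a) := by
      rintro (p | p)
      · rw [hQ₁, getLast?_append_toList]
        simp only [hLast, Sum.elim_inl, hE₁]
        split_ifs with h1 h2 <;> simp [Option.or, hml₁ p]
      · rw [hQ₂, getLast?_append_toList]
        simp only [hLast, Sum.elim_inr, hE₂]
        split_ifs with h1 h2 <;> simp [Option.or, hml₂ p]
    have hiff : ∀ a, ((Q a).getLast? = some y ↔ Last a = y) := fun a => by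
      rw [hQl a, Option.some_inj]
    rw [existsUnique_congr hiff]
    rcases y with t | t
    · by_cases htu : t = u
      · subst htu
        obtain ⟨p, hpv, hpu⟩ := hL₂' v
        refine ⟨Sum.inr p, ?_, ?_⟩
        · simp only [hLast, Sum.elim_inr]
          rw [if_pos hpv]
        · rintro (q | q) hq <;> simp only [hLast, Sum.elim_inl, Sum.elim_inr] at hq <;>
            split_ifs at hq with h1 h2 <;>
            first
              | exact congrArg Sum.inl (hpu q h1)
              | exact congrArg Sum.inl (hpu q h2)
              | exact congrArg Sum.inr (hpu q h1)
              | exact congrArg Sum.inr (hpu q h2)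
              | exact congrArg Sum.inl (hpu q (Sum.inl.inj hq))
              | exact congrArg Sum.inr (hpu q (Sum.inr.inj hq))
              | exact Sum.noConfusion hq
              | exact absurd (Sum.inl.inj hq) h1
              | exact absurd (Sum.inl.inj hq) h2
              | exact absurd (Sum.inr.inj hq) h1
              | exact absurd (Sum.inr.inj hq) h2
              | exact absurd (Sum.inl.inj hq) huw
              | exact absurd (Sum.inl.inj hq) (Ne.symm huw)
              | exact absurd (Sum.inr.inj hq) hvx
              | exact absurd (Sum.inr.inj hq) (Ne.symm hvx)
              | exact absurd (Sum.inl.inj hq).symm htu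
              | exact absurd (Sum.inl.inj hq).symm htw
              | exact absurd (Sum.inr.inj hq).symm htv
              | exact absurd (Sum.inr.inj hq).symm htx
      · by_cases htw : t = w
        · subst htw
          obtain ⟨p, hpx, hpu⟩ := hL₂' x
          refine ⟨Sum.inr p, ?_, ?_⟩
          · simp only [hLast, Sum.elim_inr]
            rw [if_neg (fun h => hvx (h.symm.trans hpx)), if_pos hpx]
          · rintro (q | q) hq <;> simp only [hLast, Sum.elim_inl, Sum.elim_inr] at hq <;>
              split_ifs at hq with h1 h2 <;>
            first
              | exact congrArg Sum.inl (hpu q h1)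
              | exact congrArg Sum.inl (hpu q h2)
              | exact congrArg Sum.inr (hpu q h1)
              | exact congrArg Sum.inr (hpu q h2)
              | exact congrArg Sum.inl (hpu q (Sum.inl.inj hq))
              | exact congrArg Sum.inr (hpu q (Sum.inr.inj hq))
              | exact Sum.noConfusion hq
              | exact absurd (Sum.inl.inj hq) h1
              | exact absurd (Sum.inl.inj hq) h2
              | exact absurd (Sum.inr.inj hq) h1
              | exact absurd (Sum.inr.inj hq) h2
              | exact absurd (Sum.inl.inj hq) huw
              | exact absurd (Sum.inl.inj hq) (Ne.symm huw)
              | exact absurd (Sum.inr.inj hq) hvx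
              | exact absurd (Sum.inr.inj hq) (Ne.symm hvx)
              | exact absurd (Sum.inl.inj hq).symm htu
              | exact absurd (Sum.inl.inj hq).symm htw
              | exact absurd (Sum.inr.inj hq).symm htv
              | exact absurd (Sum.inr.inj hq).symm htx
        · obtain ⟨p, hpt, hpu⟩ := hL₁' t
          refine ⟨Sum.inl p, ?_, ?_⟩
          · simp only [hLast, Sum.elim_inl]
            rw [if_neg (fun h => htu (hpt.symm.trans h)),
              if_neg (fun h => htw (hpt.symm.trans h)), hpt]
          · rintro (q | q) hq <;> simp only [hLast, Sum.elim_inl, Sum.elim_inr] at hq <;>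
              split_ifs at hq with h1 h2 <;>
            first
              | exact congrArg Sum.inl (hpu q h1)
              | exact congrArg Sum.inl (hpu q h2)
              | exact congrArg Sum.inr (hpu q h1)
              | exact congrArg Sum.inr (hpu q h2)
              | exact congrArg Sum.inl (hpu q (Sum.inl.inj hq))
              | exact congrArg Sum.inr (hpu q (Sum.inr.inj hq))
              | exact Sum.noConfusion hq
              | exact absurd (Sum.inl.inj hq) h1
              | exact absurd (Sum.inl.inj hq) h2
              | exact absurd (Sum.inr.inj hq) h1
              | exact absurd (Sum.inr.inj hq) h2
              | exact absurd (Sum.inl.inj hq) huw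
              | exact absurd (Sum.inl.inj hq) (Ne.symm huw)
              | exact absurd (Sum.inr.inj hq) hvx
              | exact absurd (Sum.inr.inj hq) (Ne.symm hvx)
              | exact absurd (Sum.inl.inj hq).symm htu
              | exact absurd (Sum.inl.inj hq).symm htw
              | exact absurd (Sum.inr.inj hq).symm htv
              | exact absurd (Sum.inr.inj hq).symm htx
    · by_cases htv : t = v
      · subst htv
        obtain ⟨p, hpv', hpu⟩ := hL₁' u
        refine ⟨Sum.inl p, ?_, ?_⟩
        · simp only [hLast, Sum.elim_inl]
          rw [if_pos hpv']
        · rintro (q | q) hq <;> simp only [hLast, Sum.elim_inl, Sum.elim_inr] at hq <;>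
            split_ifs at hq with h1 h2 <;>
            first
              | exact congrArg Sum.inl (hpu q h1)
              | exact congrArg Sum.inl (hpu q h2)
              | exact congrArg Sum.inr (hpu q h1)
              | exact congrArg Sum.inr (hpu q h2)
              | exact congrArg Sum.inl (hpu q (Sum.inl.inj hq))
              | exact congrArg Sum.inr (hpu q (Sum.inr.inj hq))
              | exact Sum.noConfusion hq
              | exact absurd (Sum.inl.inj hq) h1
              | exact absurd (Sum.inl.inj hq) h2
              | exact absurd (Sum.inr.inj hq) h1
              | exact absurd (Sum.inr.inj hq) h2
              | exact absurd (Sum.inl.inj hq) huw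
              | exact absurd (Sum.inl.inj hq) (Ne.symm huw)
              | exact absurd (Sum.inr.inj hq) hvx
              | exact absurd (Sum.inr.inj hq) (Ne.symm hvx)
              | exact absurd (Sum.inl.inj hq).symm htu
              | exact absurd (Sum.inl.inj hq).symm htw
              | exact absurd (Sum.inr.inj hq).symm htv
              | exact absurd (Sum.inr.inj hq).symm htx
      · by_cases htx : t = x
        · subst htx
          obtain ⟨p, hpw', hpu⟩ := hL₁' w
          refine ⟨Sum.inl p, ?_, ?_⟩
          · simp only [hLast, Sum.elim_inl]
            rw [if_neg (fun h => huw (h.symm.trans hpw')), if_pos hpw']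
          · rintro (q | q) hq <;> simp only [hLast, Sum.elim_inl, Sum.elim_inr] at hq <;>
              split_ifs at hq with h1 h2 <;>
            first
              | exact congrArg Sum.inl (hpu q h1)
              | exact congrArg Sum.inl (hpu q h2)
              | exact congrArg Sum.inr (hpu q h1)
              | exact congrArg Sum.inr (hpu q h2)
              | exact congrArg Sum.inl (hpu q (Sum.inl.inj hq))
              | exact congrArg Sum.inr (hpu q (Sum.inr.inj hq))
              | exact Sum.noConfusion hq
              | exact absurd (Sum.inl.inj hq) h1
              | exact absurd (Sum.inl.inj hq) h2
              | exact absurd (Sum.inr.inj hq) h1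
              | exact absurd (Sum.inr.inj hq) h2
              | exact absurd (Sum.inl.inj hq) huw
              | exact absurd (Sum.inl.inj hq) (Ne.symm huw)
              | exact absurd (Sum.inr.inj hq) hvx
              | exact absurd (Sum.inr.inj hq) (Ne.symm hvx)
              | exact absurd (Sum.inl.inj hq).symm htu
              | exact absurd (Sum.inl.inj hq).symm htw
              | exact absurd (Sum.inr.inj hq).symm htv
              | exact absurd (Sum.inr.inj hq).symm htx
        · obtain ⟨p, hpt, hpu⟩ := hL₂' t
          refine ⟨Sum.inr p, ?_, ?_⟩
          · simp only [hLast, Sum.elim_inr]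
            rw [if_neg (fun h => htv (hpt.symm.trans h)),
              if_neg (fun h => htx (hpt.symm.trans h)), hpt]
          · rintro (q | q) hq <;> simp only [hLast, Sum.elim_inl, Sum.elim_inr] at hq <;>
              split_ifs at hq with h1 h2 <;>
            first
              | exact congrArg Sum.inl (hpu q h1)
              | exact congrArg Sum.inl (hpu q h2)
              | exact congrArg Sum.inr (hpu q h1)
              | exact congrArg Sum.inr (hpu q h2)
              | exact congrArg Sum.inl (hpu q (Sum.inl.inj hq))
              | exact congrArg Sum.inr (hpu q (Sum.inr.inj hq))
              | exact Sum.noConfusion hq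
              | exact absurd (Sum.inl.inj hq) h1
              | exact absurd (Sum.inl.inj hq) h2
              | exact absurd (Sum.inr.inj hq) h1
              | exact absurd (Sum.inr.inj hq) h2
              | exact absurd (Sum.inl.inj hq) huw
              | exact absurd (Sum.inl.inj hq) (Ne.symm huw)
              | exact absurd (Sum.inr.inj hq) hvx
              | exact absurd (Sum.inr.inj hq) (Ne.symm hvx)
              | exact absurd (Sum.inl.inj hq).symm htu
              | exact absurd (Sum.inl.inj hq).symm htw
              | exact absurd (Sum.inr.inj hq).symm htv
              | exact absurd (Sum.inr.inj hq).symm htx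
  · -- each arc lies in exactly one path
    have key₁ : ∀ s t, G₁.Adj s t →
        ∃! c, (Sum.inl s, Sum.inl t) ∈ (Q c).zip (Q c).tail := by
      intro s t hst
      obtain ⟨p, hp, hup⟩ := hA₁ s t hst
      refine ⟨Sum.inl p, (hArc₁ p _ _).mpr (Or.inl ⟨s, t, rfl, rfl, hp⟩), ?_⟩
      rintro (q | q) hq
      · rcases (hArc₁ q _ _).mp hq with ⟨s', t', hs', ht', hm⟩ | ⟨_, _, hb⟩ | ⟨_, _, hb⟩
        · obtain rfl := Sum.inl.inj hs'
          obtain rfl := Sum.inl.inj ht'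
          exact congrArg Sum.inl (hup q hm)
        · exact absurd hb (by simp)
        · exact absurd hb (by simp)
      · rcases (hArc₂ q _ _).mp hq with ⟨s', t', hs', _, _⟩ | ⟨_, ha, _⟩ | ⟨_, ha, _⟩
        · exact absurd hs' (by simp)
        · exact absurd ha (by simp)
        · exact absurd ha (by simp)
    have key₂ : ∀ s t, G₂.Adj s t →
        ∃! c, (Sum.inr s, Sum.inr t) ∈ (Q c).zip (Q c).tail := by
      intro s t hst
      obtain ⟨p, hp, hup⟩ := hA₂ s t hst
      refine ⟨Sum.inr p, (hArc₂ p _ _).mpr (Or.inl ⟨s, t, rfl, rfl, hp⟩), ?_⟩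
      rintro (q | q) hq
      · rcases (hArc₁ q _ _).mp hq with ⟨s', t', hs', _, _⟩ | ⟨_, ha, _⟩ | ⟨_, ha, _⟩
        · exact absurd hs' (by simp)
        · exact absurd ha (by simp)
        · exact absurd ha (by simp)
      · rcases (hArc₂ q _ _).mp hq with ⟨s', t', hs', ht', hm⟩ | ⟨_, _, hb⟩ | ⟨_, _, hb⟩
        · obtain rfl := Sum.inr.inj hs'
          obtain rfl := Sum.inr.inj ht'
          exact congrArg Sum.inr (hup q hm)
        · exact absurd hb (by simp)
        · exact absurd hb (by simp)
    have keyuv : ∃! c, (Sum.inl u, Sum.inr v) ∈ (Q c).zip (Q c).tail := by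
      obtain ⟨p, hp, hup⟩ := hL₁' u
      refine ⟨Sum.inl p, (hArc₁ p _ _).mpr (Or.inr (Or.inl ⟨hp, rfl, rfl⟩)), ?_⟩
      rintro (q | q) hq
      · rcases (hArc₁ q _ _).mp hq with ⟨s', t', _, ht', _⟩ | ⟨h, _, _⟩ | ⟨_, _, hb⟩
        · exact absurd ht' (by simp)
        · exact congrArg Sum.inl (hup q h)
        · exact absurd (Sum.inr.inj hb) (by first | exact hvx | exact Ne.symm hvx)
      · rcases (hArc₂ q _ _).mp hq with ⟨s', t', hs', _, _⟩ | ⟨_, ha, _⟩ | ⟨_, ha, _⟩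
        · exact absurd hs' (by simp)
        · exact absurd ha (by simp)
        · exact absurd ha (by simp)
    have keywx : ∃! c, (Sum.inl w, Sum.inr x) ∈ (Q c).zip (Q c).tail := by
      obtain ⟨p, hp, hup⟩ := hL₁' w
      refine ⟨Sum.inl p, (hArc₁ p _ _).mpr (Or.inr (Or.inr ⟨hp, rfl, rfl⟩)), ?_⟩
      rintro (q | q) hq
      · rcases (hArc₁ q _ _).mp hq with ⟨s', t', _, ht', _⟩ | ⟨_, _, hb⟩ | ⟨h, _, _⟩
        · exact absurd ht' (by simp)
        · exact absurd (Sum.inr.inj hb) (by first | exact hvx | exact Ne.symm hvx)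
        · exact congrArg Sum.inl (hup q h)
      · rcases (hArc₂ q _ _).mp hq with ⟨s', t', hs', _, _⟩ | ⟨_, ha, _⟩ | ⟨_, ha, _⟩
        · exact absurd hs' (by simp)
        · exact absurd ha (by simp)
        · exact absurd ha (by simp)
    have keyvu : ∃! c, (Sum.inr v, Sum.inl u) ∈ (Q c).zip (Q c).tail := by
      obtain ⟨p, hp, hup⟩ := hL₂' v
      refine ⟨Sum.inr p, (hArc₂ p _ _).mpr (Or.inr (Or.inl ⟨hp, rfl, rfl⟩)), ?_⟩
      rintro (q | q) hq
      · rcases (hArc₁ q _ _).mp hq with ⟨s', t', hs', _, _⟩ | ⟨_, ha, _⟩ | ⟨_, ha, _⟩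
        · exact absurd hs' (by simp)
        · exact absurd ha (by simp)
        · exact absurd ha (by simp)
      · rcases (hArc₂ q _ _).mp hq with ⟨s', t', _, ht', _⟩ | ⟨h, _, _⟩ | ⟨_, ha, _⟩
        · exact absurd ht' (by simp)
        · exact congrArg Sum.inr (hup q h)
        · exact absurd (Sum.inr.inj ha) (by first | exact hvx | exact Ne.symm hvx)
    have keyxw : ∃! c, (Sum.inr x, Sum.inl w) ∈ (Q c).zip (Q c).tail := by
      obtain ⟨p, hp, hup⟩ := hL₂' x
      refine ⟨Sum.inr p, (hArc₂ p _ _).mpr (Or.inr (Or.inr ⟨hp, rfl, rfl⟩)), ?_⟩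
      rintro (q | q) hq
      · rcases (hArc₁ q _ _).mp hq with ⟨s', t', hs', _, _⟩ | ⟨_, ha, _⟩ | ⟨_, ha, _⟩
        · exact absurd hs' (by simp)
        · exact absurd ha (by simp)
        · exact absurd ha (by simp)
      · rcases (hArc₂ q _ _).mp hq with ⟨s', t', _, ht', _⟩ | ⟨_, ha, _⟩ | ⟨h, _, _⟩
        · exact absurd ht' (by simp)
        · exact absurd (Sum.inr.inj ha) (by first | exact hvx | exact Ne.symm hvx)
        · exact congrArg Sum.inr (hup q h)
    intro a b hab
    rw [hG', SimpleGraph.fromRel_adj] at hab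
    obtain ⟨hne, hr | hr⟩ := hab
    · rcases hr with ⟨s, t, rfl, rfl, hst⟩ | ⟨s, t, rfl, rfl, hst⟩ | ⟨rfl, rfl⟩ | ⟨rfl, rfl⟩
      · exact key₁ s t hst
      · exact key₂ s t hst
      · exact keyuv
      · exact keywx
    · rcases hr with ⟨s, t, rfl, rfl, hst⟩ | ⟨s, t, rfl, rfl, hst⟩ | ⟨rfl, rfl⟩ | ⟨rfl, rfl⟩
      · exact key₁ t s hst.symm
      · exact key₂ t s hst.symm
      · exact keyvu
      · exact keyxw
end

section
/- If graphs G and H each have an oriented perfect path double cover, then their Cartesian product G □ H has an oriented perfect path double cover. -/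
lemma mem_zip_tail_append {α : Type*} : ∀ (l1 l2 : List α) (x y : α),
    (x, y) ∈ (l1 ++ l2).zip (l1 ++ l2).tail ↔
      (x, y) ∈ l1.zip l1.tail ∨ (x, y) ∈ l2.zip l2.tail ∨
        (l1.getLast? = some x ∧ l2.head? = some y)
  | [], l2, x, y => by simp
  | [a], l2, x, y => by
    cases l2 with
    | nil => simp
    | cons b t => (simp [Prod.ext_iff, eq_comm, and_comm]; tauto)
  | a :: b :: l1, l2, x, y => by
    have ih := mem_zip_tail_append (b :: l1) l2 x y
    simp only [List.cons_append, List.tail_cons, List.zip_cons_cons, List.mem_cons,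
      List.getLast?_cons_cons] at *
    rw [ih]
    tauto

lemma mem_zip_tail_map {α β : Type*} (f : α → β) (l : List α) (x y : β) :
    (x, y) ∈ (l.map f).zip (l.map f).tail ↔
      ∃ a b, (a, b) ∈ l.zip l.tail ∧ f a = x ∧ f b = y := by
  rw [← List.map_tail, List.zip_map, List.mem_map]
  constructor
  · rintro ⟨⟨a, b⟩, hm, h⟩
    exact ⟨a, b, hm, congrArg Prod.fst h, congrArg Prod.snd h⟩
  · rintro ⟨a, b, hm, h1, h2⟩
    exact ⟨(a, b), hm, by simp [h1, h2]⟩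

/-- if `G` and `H` have an OPPDC, then so does `G □ H`. -/
theorem boxProd_hasOPPDC {V W : Type*} [Fintype V] [Fintype W]
    (G : SimpleGraph V) (H : SimpleGraph W)
    (hG : HasOPPDC G) (hH : HasOPPDC H) :
    HasOPPDC (G.boxProd H) := by
  obtain ⟨P, hP, hPlast, hParc⟩ := hG
  obtain ⟨Q, hQ, hQlast, hQarc⟩ := hH
  have hPne : ∀ u, P u ≠ [] := fun u => (hP u).1
  have hQne : ∀ v, Q v ≠ [] := fun v => (hQ v).1
  set e : V → V := fun u => (P u).getLast (hPne u) with he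
  set f : W → W := fun v => (Q v).getLast (hQne v) with hf
  have he' : ∀ u, (P u).getLast? = some (e u) := fun u => List.getLast?_eq_getLast _
  have hf' : ∀ v, (Q v).getLast? = some (f v) := fun v => List.getLast?_eq_getLast _
  have hPcons : ∀ u, ∃ t, P u = u :: t := by
    intro u
    have h4 := (hP u).2.2.2
    cases h : P u with
    | nil => rw [h] at h4; simp at h4
    | cons a t => rw [h] at h4; simp at h4; exact ⟨t, by rw [h4]⟩
  have hQcons : ∀ v, ∃ t, Q v = v :: t := by
    intro v
    have h4 := (hQ v).2.2.2
    cases h : Q v with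
    | nil => rw [h] at h4; simp at h4
    | cons a t => rw [h] at h4; simp at h4; exact ⟨t, by rw [h4]⟩
  have hEuniq : ∀ x : V, ∃! u, e u = x := by
    intro x
    obtain ⟨u, hu, hu'⟩ := hPlast x
    refine ⟨u, ?_, fun u' h => hu' u' (by show (P u').getLast? = some x; rw [he' u', h])⟩
    have := (he' u).symm.trans hu
    exact Option.some_injective _ this
  have hFuniq : ∀ y : W, ∃! v, f v = y := by
    intro y
    obtain ⟨v, hv, hv'⟩ := hQlast y
    refine ⟨v, ?_, fun v' h => hv' v' (by show (Q v').getLast? = some y; rw [hf' v', h])⟩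
    have := (hf' v).symm.trans hv
    exact Option.some_injective _ this
  have hRlast : ∀ u v,
      ((P u).map (fun a => (a, v)) ++ ((Q v).tail.map (fun d => (e u, d)))).getLast?
        = some (e u, f v) := by
    intro u v
    obtain ⟨t, hQt⟩ := hQcons v
    cases ht : t with
    | nil =>
      have hfv : f v = v := by
        have := hf' v
        rw [hQt, ht] at this
        simpa using this.symm
      rw [List.getLast?_append]
      simp [hQt, ht, List.getLast?_map, he' u, hfv]
    | cons d t' =>
      have hfv : (d :: t').getLast? = some (f v) := by
        rw [← List.getLast?_cons_cons (a := v), ← ht, ← hQt]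
        exact hf' v
      rw [List.getLast?_append, hQt]
      simp only [List.tail_cons, ht]
      rw [List.getLast?_map, hfv]
      simp
  have hRarc : ∀ u v (x y : V × W),
      (x, y) ∈ ((P u).map (fun a => (a, v)) ++ ((Q v).tail.map (fun d => (e u, d)))).zip
        ((P u).map (fun a => (a, v)) ++ ((Q v).tail.map (fun d => (e u, d)))).tail ↔
      (∃ a b, (a, b) ∈ (P u).zip (P u).tail ∧ (a, v) = x ∧ (b, v) = y) ∨
      (∃ c d, (c, d) ∈ (Q v).zip (Q v).tail ∧ ((e u : V), c) = x ∧ ((e u : V), d) = y) := by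
    intro u v x y
    rw [mem_zip_tail_append, mem_zip_tail_map, mem_zip_tail_map]
    obtain ⟨t, hQt⟩ := hQcons v
    cases ht : t with
    | nil => simp [hQt, ht]
    | cons d t' =>
      have hzip : (Q v).zip (Q v).tail = (v, d) :: ((d :: t').zip t') := by
        rw [hQt, ht]; rfl
      constructor
      · rintro (hA | hB | hC)
        · exact Or.inl hA
        · obtain ⟨c, d0, hm, hx, hy⟩ := hB
          rw [hQt, ht] at hm
          exact Or.inr ⟨c, d0, by rw [hzip]; exact List.mem_cons_of_mem _ hm, hx, hy⟩
        · obtain ⟨hx, hy⟩ := hC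
          rw [List.getLast?_map, he' u] at hx
          rw [hQt, ht] at hy
          simp only [List.tail_cons, List.map_cons, List.head?_cons, Option.map_some,
            Option.some.injEq] at hx hy
          exact Or.inr ⟨v, d, by rw [hzip]; exact List.mem_cons_self, hx, hy⟩
      · rintro (hA | ⟨c, d0, hm, hx, hy⟩)
        · exact Or.inl hA
        · rw [hzip] at hm
          rcases List.mem_cons.mp hm with heq | hm'
          · right; right
            rw [Prod.mk.injEq] at heq
            obtain ⟨hc, hd⟩ := heq
            subst hc; subst hd
            constructor
            · simp [List.getLast?_map, he' u, ← hx]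
            · simp [hQt, ht, ← hy]
          · right; left
            exact ⟨c, d0, by rw [hQt, ht]; exact hm', hx, hy⟩
  refine ⟨fun p => ((P p.1).map (fun a => (a, p.2))) ++
      ((Q p.2).tail.map (fun d => (e p.1, d))), ?_, ?_, ?_⟩
  · rintro ⟨u, v⟩
    dsimp only
    obtain ⟨tP, hPt⟩ := hPcons u
    obtain ⟨tQ, hQt⟩ := hQcons v
    refine ⟨by simp [hPne u], ?_, ?_, ?_⟩
    · -- Nodup
      rw [List.nodup_append]
      have hinj1 : Function.Injective (fun a : V => (a, v)) := fun a b h => congrArg Prod.fst h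
      have hinj2 : Function.Injective (fun d : W => ((e u : V), d)) :=
        fun a b h => congrArg Prod.snd h
      refine ⟨((hP u).2.1).map hinj1,
        (((hQ v).2.1).sublist (List.tail_sublist _)).map hinj2, ?_⟩
      intro x hx x' hx' hxx'
      subst hxx'
      obtain ⟨a, ha, hax⟩ := List.mem_map.mp hx
      obtain ⟨d, hd, had⟩ := List.mem_map.mp hx'
      have hdv : d = v := by
        rw [← hax] at had
        exact congrArg Prod.snd had
      rw [hdv, hQt] at hd
      have hnd := (hQ v).2.1
      rw [hQt] at hnd
      simp only [List.tail_cons] at hd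
      exact (List.nodup_cons.mp hnd).1 hd
    · -- Chain'
      rw [show List.Chain' _ _ ↔ List.IsChain _ _ from Iff.rfl, List.isChain_append]
      refine ⟨?_, ?_, ?_⟩
      · rw [List.isChain_map]
        refine ((hP u).2.2.1).imp ?_
        intro a b h
        exact SimpleGraph.boxProd_adj.mpr (Or.inl ⟨h, rfl⟩)
      · rw [List.isChain_map]
        refine (((hQ v).2.2.1).tail).imp ?_
        intro a b h
        exact SimpleGraph.boxProd_adj.mpr (Or.inr ⟨h, rfl⟩)
      · intro x hx y hy
        rw [List.getLast?_map, he' u] at hx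
        simp only [Option.map_some, Option.mem_def, Option.some.injEq] at hx
        subst hx
        cases htQ : (Q v).tail with
        | nil => rw [htQ] at hy; simp at hy
        | cons d t' =>
          rw [htQ] at hy
          simp only [List.map_cons, List.head?_cons, Option.mem_def, Option.some.injEq] at hy
          subst hy
          refine SimpleGraph.boxProd_adj.mpr (Or.inr ⟨?_, rfl⟩)
          have hch := (hQ v).2.2.1
          rw [hQt] at hch htQ
          simp only [List.tail_cons] at htQ
          rw [htQ] at hch
          exact (List.isChain_cons_cons.mp hch).1
    · -- head?
      rw [List.head?_append]
      simp [hPt]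
  · -- getLast? uniqueness
    rintro ⟨x, y⟩
    obtain ⟨u, hu, hu'⟩ := hEuniq x
    obtain ⟨v, hv, hv'⟩ := hFuniq y
    refine ⟨(u, v), ?_, ?_⟩
    · show (List.map (fun a => (a, v)) (P u) ++
        List.map (fun d => (e u, d)) (Q v).tail).getLast? = some (x, y)
      rw [hRlast u v, hu, hv]
    rintro ⟨u', v'⟩ h
    dsimp only at h
    rw [hRlast u' v'] at h
    simp only [Option.some.injEq, Prod.mk.injEq] at h
    exact Prod.ext (hu' u' h.1) (hv' v' h.2)
  · -- arcs
    rintro ⟨a1, a2⟩ ⟨b1, b2⟩ hadj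
    rw [SimpleGraph.boxProd_adj] at hadj
    rcases hadj with ⟨hab, h2⟩ | ⟨hab, h1⟩
    · dsimp only at hab h2
      subst h2
      obtain ⟨u, hu, hu'⟩ := hParc a1 b1 hab
      refine ⟨(u, a2), ?_, ?_⟩
      · show _ ∈ _
        dsimp only
        rw [hRarc]
        exact Or.inl ⟨a1, b1, hu, rfl, rfl⟩
      · rintro ⟨u', v'⟩ h
        dsimp only at h
        rw [hRarc] at h
        rcases h with ⟨a, b, hm, hx, hy⟩ | ⟨c, d, hm, hx, hy⟩
        · simp only [Prod.mk.injEq] at hx hy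
          obtain ⟨rfl, rfl⟩ := hx
          obtain ⟨rfl, -⟩ := hy
          exact Prod.ext (hu' u' hm) rfl
        · exfalso
          have h1 : e u' = a1 := (Prod.mk.injEq ..).mp hx |>.1
          have h2 : e u' = b1 := (Prod.mk.injEq ..).mp hy |>.1
          exact hab.ne (h1 ▸ h2 ▸ rfl)
    · dsimp only at hab h1
      subst h1
      obtain ⟨v, hv, hv'⟩ := hQarc a2 b2 hab
      obtain ⟨u, hu, hu'⟩ := hEuniq a1
      refine ⟨(u, v), ?_, ?_⟩
      · show _ ∈ _
        dsimp only
        rw [hRarc]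
        exact Or.inr ⟨a2, b2, hv, by rw [hu], by rw [hu]⟩
      · rintro ⟨u', v'⟩ h
        dsimp only at h
        rw [hRarc] at h
        rcases h with ⟨a, b, hm, hx, hy⟩ | ⟨c, d, hm, hx, hy⟩
        · exfalso
          have h1 : v' = a2 := (Prod.mk.injEq ..).mp hx |>.2
          have h2 : v' = b2 := (Prod.mk.injEq ..).mp hy |>.2
          exact hab.ne (h1 ▸ h2 ▸ rfl)
        · simp only [Prod.mk.injEq] at hx hy
          obtain ⟨he1, rfl⟩ := hx
          obtain ⟨-, rfl⟩ := hy
          exact Prod.ext (hu' u' he1) (hv' v' hm)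
end
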